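/- arXiv:1001.0038 — 7 statements merged into one kernel-verified Lean document; each statement's English description precedes it below -/
import Mathlib

section
/- Let H be a Hilbert space, I a countable index set, and (f_Q)_{Q∈I} a family of pairwise orthogonal vectors in H. Let f ∈ H and δ > 0 satisfy Σ_{Q∈I} ‖f_Q‖² ≤ ‖f‖². Let (Ω, ℙ) be a probability space and (B_Q)_{Q∈I} measurable subsets of Ω with ℙ(B_Q) ≤ δ² for every Q ∈ I. For ω ∈ Ω define f_bad(ω) := Σ_{Q∈I} 1_{B_Q}(ω)·f_Q (the series converges unconditionally in H). Then ∫_Ω ‖f_bad(ω)‖ dℙ(ω) ≤ δ·‖f‖. -/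
open MeasureTheory

section Aux

variable {H : Type*} [NormedAddCommGroup H] [InnerProductSpace ℝ H] [CompleteSpace H]
  {I : Type*} [Countable I]

/-- The orthogonal family of spans. -/
lemma orthogonalFamily_span (fQ : I → H)
    (horth : ∀ Q Q' : I, Q ≠ Q' → (inner ℝ (fQ Q) (fQ Q') : ℝ) = 0) :
    OrthogonalFamily ℝ (fun Q => (ℝ ∙ fQ Q : Submodule ℝ H))
      (fun Q => (ℝ ∙ fQ Q : Submodule ℝ H).subtypeₗᵢ) := by
  intro Q Q' hne v w
  obtain ⟨c, hc⟩ := Submodule.mem_span_singleton.1 v.2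
  obtain ⟨d, hd⟩ := Submodule.mem_span_singleton.1 w.2
  show (inner ℝ (v : H) (w : H) : ℝ) = 0
  rw [← hc, ← hd, inner_smul_left, inner_smul_right, horth Q Q' hne]
  simp

end Aux

/-- If `(f_Q)` is an orthogonal family with `Σ ‖f_Q‖² ≤ ‖f‖²` and each "bad event" `B_Q` has
probability at most `δ²`, then the random bad part `f_bad(ω) = Σ_{Q} 1_{B_Q}(ω)·f_Q`
satisfies `𝔼‖f_bad‖ ≤ δ‖f‖`. -/
theorem expectation_norm_bad_part_le
    {H : Type*} [NormedAddCommGroup H] [InnerProductSpace ℝ H] [CompleteSpace H]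
    {I : Type*} [Countable I]
    (fQ : I → H) (horth : ∀ Q Q' : I, Q ≠ Q' → (inner ℝ (fQ Q) (fQ Q') : ℝ) = 0)
    (f : H) (δ : ℝ) (hδ : 0 < δ)
    (hsummable : Summable fun Q => ‖fQ Q‖ ^ 2)
    (hbessel : ∑' Q, ‖fQ Q‖ ^ 2 ≤ ‖f‖ ^ 2)
    {Ω : Type*} [MeasurableSpace Ω] (ℙ : Measure Ω) [IsProbabilityMeasure ℙ]
    (B : I → Set Ω) (hBmeas : ∀ Q, MeasurableSet (B Q))
    (hBprob : ∀ Q, ℙ (B Q) ≤ ENNReal.ofReal (δ ^ 2)) :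
    (∀ ω : Ω, Summable fun Q => Set.indicator (B Q) (fun _ => (1 : ℝ)) ω • fQ Q) ∧
      ∫ ω, ‖∑' Q, Set.indicator (B Q) (fun _ => (1 : ℝ)) ω • fQ Q‖ ∂ℙ ≤ δ * ‖f‖ := by
  classical
  set a : Ω → I → ℝ := fun ω Q => Set.indicator (B Q) (fun _ => (1 : ℝ)) ω with ha
  have ha01 : ∀ ω Q, a ω Q = 0 ∨ a ω Q = 1 := by
    intro ω Q
    by_cases h : ω ∈ B Q
    · right; simp [ha, Set.indicator_of_mem h]
    · left; simp [ha, Set.indicator_of_notMem h]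
  have haidem : ∀ ω Q, a ω Q * a ω Q = a ω Q := by
    intro ω Q; rcases ha01 ω Q with h | h <;> rw [h] <;> ring
  have hale : ∀ ω Q, 0 ≤ a ω Q ∧ a ω Q ≤ 1 := by
    intro ω Q; rcases ha01 ω Q with h | h <;> rw [h] <;> norm_num
  have hOF := orthogonalFamily_span fQ horth
  -- the vectors in the spans
  set gv : Ω → ∀ Q : I, (ℝ ∙ fQ Q : Submodule ℝ H) := fun ω Q =>
    ⟨a ω Q • fQ Q, Submodule.smul_mem _ _ (Submodule.mem_span_singleton_self _)⟩ with hgv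
  have hgvnormsq : ∀ ω Q, ‖gv ω Q‖ ^ 2 = a ω Q * ‖fQ Q‖ ^ 2 := by
    intro ω Q
    have h0 : ‖gv ω Q‖ = ‖a ω Q • fQ Q‖ := rfl
    rw [h0, norm_smul, Real.norm_eq_abs, mul_pow, sq_abs,
      show a ω Q ^ 2 = a ω Q * a ω Q from sq (a ω Q), haidem]
  -- summability of the weighted norms squared
  have hsum2 : ∀ ω, Summable fun Q => a ω Q * ‖fQ Q‖ ^ 2 := by
    intro ω
    refine Summable.of_nonneg_of_le (fun Q => mul_nonneg (hale ω Q).1 (sq_nonneg _))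
      (fun Q => ?_) hsummable
    calc a ω Q * ‖fQ Q‖ ^ 2 ≤ 1 * ‖fQ Q‖ ^ 2 :=
          mul_le_mul_of_nonneg_right (hale ω Q).2 (sq_nonneg _)
      _ = ‖fQ Q‖ ^ 2 := one_mul _
  have hsummand : ∀ ω, Summable fun Q =>
      (ℝ ∙ fQ Q : Submodule ℝ H).subtypeₗᵢ (gv ω Q) := by
    intro ω
    rw [hOF.summable_iff_norm_sq_summable]
    refine (hsum2 ω).congr fun Q => ?_
    exact (hgvnormsq ω Q).symm
  have hsummand' : ∀ ω : Ω, Summable fun Q =>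
      Set.indicator (B Q) (fun _ => (1 : ℝ)) ω • fQ Q := fun ω => hsummand ω
  refine ⟨hsummand', ?_⟩
  -- norm of the sum squared
  set N : Ω → ℝ := fun ω => ‖∑' Q, a ω Q • fQ Q‖ with hN
  have hNnonneg : ∀ ω, 0 ≤ N ω := fun ω => norm_nonneg _
  have hNsq : ∀ ω, N ω ^ 2 = ∑' Q, a ω Q * ‖fQ Q‖ ^ 2 := by
    intro ω
    have hs := (hsummand ω).hasSum
    have h1 : Filter.Tendsto (fun t : Finset I => ‖∑ Q ∈ t,
        (ℝ ∙ fQ Q : Submodule ℝ H).subtypeₗᵢ (gv ω Q)‖ ^ 2) Filter.atTop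
        (nhds (‖∑' Q, (ℝ ∙ fQ Q : Submodule ℝ H).subtypeₗᵢ (gv ω Q)‖ ^ 2)) := by
      exact ((continuous_norm.pow 2).continuousAt.tendsto.comp hs)
    have h2 : ∀ t : Finset I, ‖∑ Q ∈ t, (ℝ ∙ fQ Q : Submodule ℝ H).subtypeₗᵢ (gv ω Q)‖ ^ 2
        = ∑ Q ∈ t, a ω Q * ‖fQ Q‖ ^ 2 := by
      intro t
      rw [hOF.norm_sum]
      exact Finset.sum_congr rfl fun Q _ => hgvnormsq ω Q
    have h3 : HasSum (fun Q => a ω Q * ‖fQ Q‖ ^ 2)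
        (‖∑' Q, (ℝ ∙ fQ Q : Submodule ℝ H).subtypeₗᵢ (gv ω Q)‖ ^ 2) := by
      unfold HasSum
      refine h1.congr fun t => (h2 t)
    show ‖∑' Q, a ω Q • fQ Q‖ ^ 2 = ∑' Q, a ω Q * ‖fQ Q‖ ^ 2
    exact h3.tsum_eq.symm
  -- the ENNReal valued square function
  set h : Ω → ENNReal := fun ω => ∑' Q,
    Set.indicator (B Q) (fun _ => ENNReal.ofReal (‖fQ Q‖ ^ 2)) ω with hh
  have hhmeas : Measurable h := by
    apply Measurable.ennreal_tsum
    intro Q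
    exact Measurable.indicator measurable_const (hBmeas Q)
  have hhval : ∀ ω, h ω = ENNReal.ofReal (N ω ^ 2) := by
    intro ω
    have heq : ∀ Q, Set.indicator (B Q) (fun _ => ENNReal.ofReal (‖fQ Q‖ ^ 2)) ω
        = ENNReal.ofReal (a ω Q * ‖fQ Q‖ ^ 2) := by
      intro Q
      by_cases hmem : ω ∈ B Q
      · simp [Set.indicator_of_mem hmem, ha, hmem]
      · simp [Set.indicator_of_notMem hmem, ha, hmem]
    rw [hh]
    simp only [heq]
    rw [← ENNReal.ofReal_tsum_of_nonneg
      (fun Q => mul_nonneg (hale ω Q).1 (sq_nonneg _)) (hsum2 ω), hNsq ω]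
  have hNmeas : Measurable N := by
    have : N = fun ω => Real.sqrt ((h ω).toReal) := by
      funext ω
      rw [hhval ω, ENNReal.toReal_ofReal (sq_nonneg _), Real.sqrt_sq (hNnonneg ω)]
    rw [this]
    exact (hhmeas.ennreal_toReal).sqrt
  -- turn the Bochner integral into a lower integral
  rw [integral_eq_lintegral_of_nonneg_ae (Filter.Eventually.of_forall hNnonneg)
    hNmeas.aestronglyMeasurable]
  have hprod : 0 ≤ δ * ‖f‖ := mul_nonneg hδ.le (norm_nonneg f)
  refine ENNReal.toReal_le_of_le_ofReal hprod ?_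
  -- Cauchy-Schwarz
  have hCS : ∫⁻ ω, ENNReal.ofReal (N ω) ∂ℙ ≤
      (∫⁻ ω, ENNReal.ofReal (N ω) ^ (2 : ℝ) ∂ℙ) ^ (1 / (2:ℝ)) *
        (∫⁻ ω, (1 : ENNReal) ^ (2 : ℝ) ∂ℙ) ^ (1 / (2:ℝ)) := by
    have hconj : Real.HolderConjugate 2 2 := Real.HolderConjugate.two_two
    have hcs := ENNReal.lintegral_mul_le_Lp_mul_Lq ℙ hconj
      (f := fun ω => ENNReal.ofReal (N ω)) (g := fun _ => 1)
      (hNmeas.ennreal_ofReal.aemeasurable) aemeasurable_const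
    simpa only [Pi.mul_apply, mul_one] using hcs
  have hone : (∫⁻ ω, (1 : ENNReal) ^ (2 : ℝ) ∂ℙ) ^ (1 / (2:ℝ)) = 1 := by
    simp [ENNReal.one_rpow, lintegral_const]
  rw [hone, mul_one] at hCS
  refine hCS.trans ?_
  -- compute the square integral
  have hsqeq : ∀ ω, ENNReal.ofReal (N ω) ^ (2 : ℝ) = h ω := by
    intro ω
    rw [ENNReal.ofReal_rpow_of_nonneg (hNnonneg ω) (by norm_num), hhval ω]
    congr 1
    rw [show (2:ℝ) = ((2:ℕ):ℝ) by norm_num, Real.rpow_natCast]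
  have hint : ∫⁻ ω, ENNReal.ofReal (N ω) ^ (2 : ℝ) ∂ℙ
      = ∑' Q, ℙ (B Q) * ENNReal.ofReal (‖fQ Q‖ ^ 2) := by
    calc ∫⁻ ω, ENNReal.ofReal (N ω) ^ (2 : ℝ) ∂ℙ = ∫⁻ ω, h ω ∂ℙ := by
          exact lintegral_congr fun ω => hsqeq ω
      _ = ∑' Q, ∫⁻ ω, Set.indicator (B Q) (fun _ => ENNReal.ofReal (‖fQ Q‖ ^ 2)) ω ∂ℙ := by
          rw [hh]
          exact lintegral_tsum fun Q =>
            (Measurable.indicator measurable_const (hBmeas Q)).aemeasurable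
      _ = ∑' Q, ℙ (B Q) * ENNReal.ofReal (‖fQ Q‖ ^ 2) := by
          refine tsum_congr fun Q => ?_
          rw [lintegral_indicator (hBmeas Q), setLIntegral_const, mul_comm]
  have hbound : ∫⁻ ω, ENNReal.ofReal (N ω) ^ (2 : ℝ) ∂ℙ ≤ ENNReal.ofReal ((δ * ‖f‖) ^ 2) := by
    rw [hint]
    have hterm : ∀ Q, ℙ (B Q) * ENNReal.ofReal (‖fQ Q‖ ^ 2)
        ≤ ENNReal.ofReal (δ ^ 2 * ‖fQ Q‖ ^ 2) := by
      intro Q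
      rw [ENNReal.ofReal_mul (sq_nonneg δ)]
      exact mul_le_mul_left (hBprob Q) _
    calc ∑' Q, ℙ (B Q) * ENNReal.ofReal (‖fQ Q‖ ^ 2)
        ≤ ∑' Q, ENNReal.ofReal (δ ^ 2 * ‖fQ Q‖ ^ 2) := ENNReal.tsum_le_tsum hterm
      _ = ENNReal.ofReal (∑' Q, δ ^ 2 * ‖fQ Q‖ ^ 2) := by
          rw [ENNReal.ofReal_tsum_of_nonneg
            (fun Q => mul_nonneg (sq_nonneg δ) (sq_nonneg _)) (hsummable.mul_left _)]
      _ ≤ ENNReal.ofReal ((δ * ‖f‖) ^ 2) := by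
          refine ENNReal.ofReal_le_ofReal ?_
          rw [tsum_mul_left, mul_pow]
          exact mul_le_mul_of_nonneg_left hbessel (sq_nonneg δ)
  calc (∫⁻ ω, ENNReal.ofReal (N ω) ^ (2 : ℝ) ∂ℙ) ^ (1 / (2:ℝ))
      ≤ (ENNReal.ofReal ((δ * ‖f‖) ^ 2)) ^ (1 / (2:ℝ)) :=
        ENNReal.rpow_le_rpow hbound (by norm_num)
    _ = ENNReal.ofReal (δ * ‖f‖) := by
        rw [ENNReal.ofReal_rpow_of_nonneg (sq_nonneg _) (by norm_num)]
        congr 1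
        rw [← Real.rpow_natCast (δ * ‖f‖) 2, ← Real.rpow_mul hprod]
        norm_num
end

section
/- Let (X,ρ) be a metric space, μ a Borel measure on X, and let k be a Calderón–Zygmund kernel of order m > 0 on (X,ρ) with constants C_CZ, τ, δ_CZ. Set α := τ/(2(τ+m)). Let Q, R be Borel subsets of X with μ(Q), μ(R) < ∞ and let 0 < s(Q) ≤ s(R) satisfy diam(Q) ≤ s(Q) and diam(R) ≤ s(R). Let φ ∈ L²(μ) vanish outside Q with ∫_X φ dμ = 0, and let ψ ∈ L²(μ) vanish outside R. Assume dist(Q, supp ψ) ≥ s(Q)^α · s(R)^{1−α} and s(Q)^α·s(R)^{1−α} ≥ s(Q)/δ_CZ. Then |∫_X ∫_X k(x,y) φ(x) ψ(y) dμ(x) dμ(y)| ≤ C · (s(Q)^{τ/2} s(R)^{τ/2} / D(Q,R)^{m+τ}) · √(μ(Q)μ(R)) · ‖φ‖_{L²(μ)} ‖ψ‖_{L²(μ)}, where D(Q,R) := s(Q) + s(R) + dist(Q,R) and C depends only on C_CZ, τ, m. -/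
open MeasureTheory Metric

noncomputable def setDist {X : Type*} [MetricSpace X] (S T : Set X) : ℝ :=
  sInf (Set.image2 dist S T)

lemma l1_bound {X : Type} [MeasurableSpace X] (μ : Measure X) (Q : Set X)
    (hQ : MeasurableSet Q) (hμQ : μ Q < ⊤) (φ : X → ℂ)
    (hφ : MemLp φ 2 μ) (hsupp : ∀ x ∉ Q, φ x = 0) :
    Integrable φ μ ∧ ∫ x, ‖φ x‖ ∂μ ≤ Real.sqrt (μ Q).toReal * (eLpNorm φ 2 μ).toReal := by
  have hind : Q.indicator φ = φ := by
    funext x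
    by_cases hx : x ∈ Q
    · simp [Set.indicator_of_mem hx]
    · simp [Set.indicator_of_notMem hx, hsupp x hx]
  haveI : IsFiniteMeasure (μ.restrict Q) :=
    ⟨by rwa [Measure.restrict_apply_univ]⟩
  have hres : MemLp φ 2 (μ.restrict Q) := hφ.restrict Q
  have hintr : Integrable φ (μ.restrict Q) := hres.integrable (by norm_num)
  have hint : Integrable φ μ := by
    rw [← hind]
    exact (integrable_indicator_iff hQ).mpr hintr
  refine ⟨hint, ?_⟩
  have h1 : ∫ x, ‖φ x‖ ∂μ = ∫ x, ‖φ x‖ ∂(μ.restrict Q) := by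
    rw [← integral_indicator hQ]
    congr 1
    funext x
    by_cases hx : x ∈ Q
    · simp [Set.indicator_of_mem hx]
    · simp [Set.indicator_of_notMem hx, hsupp x hx]
  have h2 : ∫ x, ‖φ x‖ ∂(μ.restrict Q) = (eLpNorm φ 1 (μ.restrict Q)).toReal := by
    rw [eLpNorm_one_eq_lintegral_enorm,
      integral_norm_eq_lintegral_enorm hintr.aestronglyMeasurable]
  have h3 : eLpNorm φ 1 (μ.restrict Q) ≤
      eLpNorm φ 2 (μ.restrict Q) * (μ.restrict Q) Set.univ ^ ((1:ℝ)/1 - 1/2) :=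
    eLpNorm_le_eLpNorm_mul_rpow_measure_univ (by norm_num) hres.aestronglyMeasurable
  have h4 : eLpNorm φ 1 (μ.restrict Q) ≤ eLpNorm φ 2 μ * μ Q ^ ((1:ℝ)/2) := by
    refine h3.trans ?_
    rw [Measure.restrict_apply_univ]
    have : ((1:ℝ)/1 - 1/2) = (1:ℝ)/2 := by norm_num
    rw [this]
    exact mul_le_mul_left (eLpNorm_mono_measure φ Measure.restrict_le_self) _
  have hfin : eLpNorm φ 2 μ * μ Q ^ ((1:ℝ)/2) ≠ ⊤ :=
    ENNReal.mul_ne_top hφ.2.ne (ENNReal.rpow_ne_top_of_nonneg (by norm_num) hμQ.ne)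
  have h5 := ENNReal.toReal_mono hfin h4
  rw [ENNReal.toReal_mul, ← ENNReal.toReal_rpow, ← Real.sqrt_eq_rpow] at h5
  rw [h1, h2]
  linarith [h5]

set_option maxHeartbeats 1000000 in
/-- Long-range interaction lemma: if `φ` is supported on `Q`, has mean zero, `ψ` is supported
on `R`, `s(Q) ≤ s(R)`, and `dist(Q, supp ψ) ≥ s(Q)^α s(R)^{1−α}` (with `α = τ/(2(τ+m))`),
then the bilinear form of a Calderón–Zygmund kernel of order `m` satisfies
`|(φ, Tψ)| ≤ C · s(Q)^{τ/2} s(R)^{τ/2} D(Q,R)^{−(m+τ)} √(μ(Q)μ(R)) ‖φ‖₂ ‖ψ‖₂`,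
where `C` depends only on `C_CZ, τ, m`. -/
theorem far_interaction_estimate (m τ C_CZ : ℝ)
    (hm : 0 < m) (hτ : 0 < τ) (hCCZ : 0 < C_CZ) :
    ∃ C : ℝ, 0 < C ∧
      ∀ (X : Type) [MetricSpace X] [MeasurableSpace X] [BorelSpace X]
        (μ : Measure X) (δ_CZ : ℝ) (k : X → X → ℂ) (Q R : Set X) (sQ sR : ℝ)
        (φ ψ : X → ℂ),
        0 < δ_CZ → δ_CZ < 1 →
        Measurable (Function.uncurry k) →
        (∀ x y : X, x ≠ y → ‖k x y‖ ≤ C_CZ / dist x y ^ m) →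
        (∀ x y y' : X, x ≠ y → x ≠ y' → dist y y' ≤ δ_CZ * dist x y →
          ‖k x y - k x y'‖ + ‖k y x - k y' x‖ ≤ C_CZ * dist y y' ^ τ / dist x y ^ (m + τ)) →
        MeasurableSet Q → MeasurableSet R → μ Q < ⊤ → μ R < ⊤ →
        0 < sQ → sQ ≤ sR →
        EMetric.diam Q ≤ ENNReal.ofReal sQ → EMetric.diam R ≤ ENNReal.ofReal sR →
        MemLp φ 2 μ → (∀ x, x ∉ Q → φ x = 0) → (∫ x, φ x ∂μ) = 0 →
        MemLp ψ 2 μ → (∀ x, x ∉ R → ψ x = 0) →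
        (∀ x ∈ Q, ∀ y ∈ Function.support ψ,
          sQ ^ (τ / (2 * (τ + m))) * sR ^ (1 - τ / (2 * (τ + m))) ≤ dist x y) →
        sQ / δ_CZ ≤ sQ ^ (τ / (2 * (τ + m))) * sR ^ (1 - τ / (2 * (τ + m))) →
        ‖∫ y, (∫ x, k x y * φ x * ψ y ∂μ) ∂μ‖ ≤
          C * (sQ ^ (τ / 2) * sR ^ (τ / 2) / (sQ + sR + setDist Q R) ^ (m + τ)) *
            Real.sqrt ((μ Q).toReal * (μ R).toReal) *
            (eLpNorm φ 2 μ).toReal * (eLpNorm ψ 2 μ).toReal := by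
  have hmτ : (0:ℝ) < m + τ := by linarith
  refine ⟨C_CZ * 3 ^ (m + τ), by positivity, ?_⟩
  intro X _ _ _ μ δ_CZ k Q R sQ sR φ ψ hδ0 hδ1 hkmeas hksize hksmooth hQm hRm hμQ hμR
    hsQ hsQR hdQ hdR hφ2 hφsupp hφ0 hψ2 hψsupp hfar hδfar
  have hsR : 0 < sR := lt_of_lt_of_le hsQ hsQR
  set α : ℝ := τ / (2 * (τ + m)) with hα
  set d₀ : ℝ := sQ ^ α * sR ^ (1 - α) with hd₀def
  have hd₀ : 0 < d₀ := by positivity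
  set Dq : ℝ := sQ + sR + setDist Q R with hDdef
  have hsd0 : 0 ≤ setDist Q R := by
    apply Real.sInf_nonneg
    rintro z ⟨a, _, b, _, rfl⟩
    exact dist_nonneg
  have hDq : 0 < Dq := by rw [hDdef]; linarith
  have hψR : Function.support ψ ⊆ R := fun x hx => by
    by_contra hxR; exact hx (hψsupp x hxR)
  have hsdle : ∀ x ∈ Q, ∀ y ∈ Function.support ψ, setDist Q R ≤ dist x y := by
    intro x hx y hy
    apply csInf_le
    · refine ⟨0, ?_⟩
      rintro z ⟨a, _, b, _, rfl⟩
      exact dist_nonneg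
    · exact Set.mem_image2_of_mem hx (hψR hy)
  have hτmne : τ + m ≠ 0 := by linarith
  have hαm : α * (m + τ) = τ / 2 := by rw [hα]; field_simp; ring
  have h1αm : (1 - α) * (m + τ) = m + τ / 2 := by rw [hα]; field_simp; ring
  obtain ⟨hφL1, hφ12⟩ := l1_bound μ Q hQm hμQ φ hφ2 hφsupp
  obtain ⟨hψL1, hψ12⟩ := l1_bound μ R hRm hμR ψ hψ2 hψsupp
  set K : ℝ := C_CZ * 3 ^ (m + τ) * (sQ ^ (τ / 2) * sR ^ (τ / 2) / Dq ^ (m + τ)) with hKdef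
  have hK0 : 0 ≤ K := by positivity
  have step1 : ∀ d : ℝ, d₀ ≤ d → setDist Q R ≤ d → C_CZ * sQ ^ τ / d ^ (m + τ) ≤ K := by
    intro d hd1 hd2
    have hdpos : 0 < d := lt_of_lt_of_le hd₀ hd1
    have key : sQ ^ (τ/2) * Dq ^ (m+τ) ≤ 3 ^ (m+τ) * (sR ^ (τ/2) * d ^ (m+τ)) := by
      rcases le_total sR d with hcase | hcase
      · have hD3 : Dq ≤ 3 * d := by rw [hDdef]; linarith
        calc sQ ^ (τ/2) * Dq ^ (m+τ)
            ≤ sR ^ (τ/2) * (3*d) ^ (m+τ) :=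
              mul_le_mul (Real.rpow_le_rpow hsQ.le hsQR (by positivity))
                (Real.rpow_le_rpow hDq.le hD3 hmτ.le) (by positivity) (by positivity)
          _ = 3 ^ (m+τ) * (sR ^ (τ/2) * d ^ (m+τ)) := by
              rw [Real.mul_rpow (by norm_num) hdpos.le]; ring
      · have hD3 : Dq ≤ 3 * sR := by rw [hDdef]; linarith
        have hdlow : sQ ^ (τ/2) * sR ^ (m + τ/2) ≤ d ^ (m+τ) := by
          have e1 : sQ ^ (τ/2) = (sQ ^ α) ^ (m+τ) := by
            rw [← Real.rpow_mul hsQ.le, hαm]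
          have e2 : sR ^ (m + τ/2) = (sR ^ (1-α)) ^ (m+τ) := by
            rw [← Real.rpow_mul hsR.le, h1αm]
          rw [e1, e2, ← Real.mul_rpow (by positivity) (by positivity)]
          exact Real.rpow_le_rpow (by positivity) hd1 hmτ.le
        calc sQ ^ (τ/2) * Dq ^ (m+τ)
            ≤ sQ ^ (τ/2) * (3*sR) ^ (m+τ) :=
              mul_le_mul_of_nonneg_left (Real.rpow_le_rpow hDq.le hD3 hmτ.le) (by positivity)
          _ = 3 ^ (m+τ) * (sQ ^ (τ/2) * sR ^ (m+τ)) := by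
              rw [Real.mul_rpow (by norm_num) hsR.le]; ring
          _ = 3 ^ (m+τ) * (sR ^ (τ/2) * (sQ ^ (τ/2) * sR ^ (m + τ/2))) := by
              rw [show m + τ = τ/2 + (m + τ/2) by ring, Real.rpow_add hsR]; ring
          _ ≤ 3 ^ (m+τ) * (sR ^ (τ/2) * d ^ (m+τ)) := by
              have h := mul_le_mul_of_nonneg_left hdlow
                (show (0:ℝ) ≤ sR ^ (τ/2) by positivity)
              nlinarith [h, Real.rpow_nonneg (show (0:ℝ) ≤ 3 by norm_num) (m+τ)]
    have hsQτ : sQ ^ τ = sQ ^ (τ/2) * sQ ^ (τ/2) := by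
      rw [← Real.rpow_add hsQ]; norm_num
    rw [hKdef, mul_div_assoc']
    rw [div_le_div_iff₀ (by positivity) (by positivity), hsQτ]
    nlinarith [mul_le_mul_of_nonneg_left key (show (0:ℝ) ≤ C_CZ * sQ ^ (τ/2) by positivity)]
  have step2 : ∀ y ∈ Function.support ψ,
      ‖∫ x, k x y * φ x ∂μ‖ ≤ K * ∫ x, ‖φ x‖ ∂μ := by
    intro y hy
    rcases Set.eq_empty_or_nonempty Q with hQe | ⟨x₀, hx₀⟩
    · have hz : ∀ x, φ x = 0 := fun x => hφsupp x (by simp [hQe])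
      simp [hz]
    · set d := dist x₀ y with hddef
      have hd₀d : d₀ ≤ d := hfar x₀ hx₀ y hy
      have hdpos : 0 < d := lt_of_lt_of_le hd₀ hd₀d
      have hdiamQ : ∀ x ∈ Q, ∀ x' ∈ Q, dist x x' ≤ sQ := by
        intro x hx x' hx'
        have h := (EMetric.edist_le_diam_of_mem hx hx').trans hdQ
        calc dist x x' = (edist x x').toReal := by rw [dist_edist]
          _ ≤ (ENNReal.ofReal sQ).toReal := ENNReal.toReal_mono ENNReal.ofReal_ne_top h
          _ = sQ := ENNReal.toReal_ofReal hsQ.le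
      have hkdiff : ∀ x ∈ Q, ‖k x y - k x₀ y‖ ≤ C_CZ * sQ ^ τ / d ^ (m + τ) := by
        intro x hx
        have hyx₀ : y ≠ x₀ := by
          intro h; rw [hddef, h, dist_self] at hdpos; exact lt_irrefl _ hdpos
        have hdxy : d₀ ≤ dist x y := hfar x hx y hy
        have hyx : y ≠ x := by
          intro h; rw [h, dist_self] at hdxy; linarith
        have hδd₀ : sQ ≤ δ_CZ * d₀ := by
          rw [div_le_iff₀ hδ0] at hδfar; linarith [hδfar]
        have hdd : dist x₀ x ≤ δ_CZ * dist y x₀ := by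
          have h1 : dist x₀ x ≤ sQ := hdiamQ x₀ hx₀ x hx
          have h2 : δ_CZ * d₀ ≤ δ_CZ * d := mul_le_mul_of_nonneg_left hd₀d hδ0.le
          have h3 : dist y x₀ = d := by rw [dist_comm, hddef]
          rw [h3]; linarith
        have hs := hksmooth y x₀ x hyx₀ hyx hdd
        have hb : ‖k x y - k x₀ y‖ ≤ C_CZ * dist x₀ x ^ τ / dist y x₀ ^ (m+τ) := by
          rw [norm_sub_rev]
          linarith [norm_nonneg (k y x₀ - k y x)]
        refine hb.trans ?_
        rw [(dist_comm y x₀).trans hddef.symm]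
        gcongr
        exact hdiamQ x₀ hx₀ x hx
      have hmeas_k : Measurable fun x => k x y :=
        hkmeas.comp (measurable_id.prodMk measurable_const)
      have hbd : ∀ x, ‖k x y * φ x‖ ≤ C_CZ / d₀ ^ m * ‖φ x‖ := by
        intro x
        by_cases hx : φ x = 0
        · simp [hx]
        · have hxQ : x ∈ Q := by by_contra h; exact hx (hφsupp x h)
          have hdx : d₀ ≤ dist x y := hfar x hxQ y hy
          have hxy : x ≠ y := by intro h; rw [h, dist_self] at hdx; linarith
          rw [norm_mul]
          refine mul_le_mul_of_nonneg_right ((hksize x y hxy).trans ?_) (norm_nonneg _)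
          gcongr
      have hIky : Integrable (fun x => k x y * φ x) μ := by
        refine Integrable.mono (hφL1.norm.const_mul (C_CZ / d₀ ^ m))
          (hmeas_k.aestronglyMeasurable.mul hφ2.aestronglyMeasurable)
          (ae_of_all _ fun x => ?_)
        refine (hbd x).trans ?_
        exact le_abs_self _
      have hIk₀ : Integrable (fun x => k x₀ y * φ x) μ := hφL1.const_mul _
      have heq : ∫ x, k x y * φ x ∂μ = ∫ x, (k x y - k x₀ y) * φ x ∂μ := by
        have hfn : (fun x => (k x y - k x₀ y) * φ x)
            = fun x => k x y * φ x - k x₀ y * φ x := by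
          funext x; ring
        rw [hfn, integral_sub hIky hIk₀, integral_const_mul, hφ0, mul_zero, sub_zero]
      rw [heq]
      calc ‖∫ x, (k x y - k x₀ y) * φ x ∂μ‖
          ≤ ∫ x, ‖(k x y - k x₀ y) * φ x‖ ∂μ := norm_integral_le_integral_norm _
        _ ≤ ∫ x, (C_CZ * sQ ^ τ / d ^ (m+τ)) * ‖φ x‖ ∂μ := by
            refine integral_mono_of_nonneg (ae_of_all _ fun x => norm_nonneg _)
              (hφL1.norm.const_mul _) (ae_of_all _ fun x => ?_)
            by_cases hx : φ x = 0
            · simp [hx]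
            · have hxQ : x ∈ Q := by by_contra h; exact hx (hφsupp x h)
              show ‖(k x y - k x₀ y) * φ x‖ ≤ C_CZ * sQ ^ τ / d ^ (m + τ) * ‖φ x‖
              rw [norm_mul]
              exact mul_le_mul_of_nonneg_right (hkdiff x hxQ) (norm_nonneg _)
        _ = (C_CZ * sQ ^ τ / d ^ (m+τ)) * ∫ x, ‖φ x‖ ∂μ := integral_const_mul _ _
        _ ≤ K * ∫ x, ‖φ x‖ ∂μ :=
            mul_le_mul_of_nonneg_right (step1 d hd₀d (hsdle x₀ hx₀ y hy))
              (integral_nonneg fun x => norm_nonneg _)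
  have step3 : ∀ y, ‖∫ x, k x y * φ x * ψ y ∂μ‖ ≤ (K * ∫ x, ‖φ x‖ ∂μ) * ‖ψ y‖ := by
    intro y
    by_cases hy : ψ y = 0
    · simp [hy]
    · have hmem : y ∈ Function.support ψ := hy
      rw [integral_mul_const, norm_mul]
      exact mul_le_mul_of_nonneg_right (step2 y hmem) (norm_nonneg _)
  calc ‖∫ y, ∫ x, k x y * φ x * ψ y ∂μ ∂μ‖
      ≤ ∫ y, ‖∫ x, k x y * φ x * ψ y ∂μ‖ ∂μ := norm_integral_le_integral_norm _
    _ ≤ ∫ y, (K * ∫ x, ‖φ x‖ ∂μ) * ‖ψ y‖ ∂μ :=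
        integral_mono_of_nonneg (ae_of_all _ fun y => norm_nonneg _)
          (hψL1.norm.const_mul _) (ae_of_all _ step3)
    _ = (K * ∫ x, ‖φ x‖ ∂μ) * ∫ y, ‖ψ y‖ ∂μ := integral_const_mul _ _
    _ ≤ (K * (Real.sqrt (μ Q).toReal * (eLpNorm φ 2 μ).toReal))
          * (Real.sqrt (μ R).toReal * (eLpNorm ψ 2 μ).toReal) := by
        exact mul_le_mul (mul_le_mul_of_nonneg_left hφ12 hK0) hψ12
          (integral_nonneg fun _ => norm_nonneg _)
          (mul_nonneg hK0 (mul_nonneg (Real.sqrt_nonneg _) ENNReal.toReal_nonneg))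
    _ = C_CZ * 3 ^ (m+τ) * (sQ ^ (τ/2) * sR ^ (τ/2) / Dq ^ (m+τ))
          * Real.sqrt ((μ Q).toReal * (μ R).toReal)
          * (eLpNorm φ 2 μ).toReal * (eLpNorm ψ 2 μ).toReal := by
        rw [Real.sqrt_mul ENNReal.toReal_nonneg, hKdef]; ring
end

section
/- Let (X,ρ) be a metric space, μ a Borel measure on X, m, τ, A > 0, δ₀ > 0, and y ∈ X. Assume μ(B(y,r)) ≤ A·r^m for every r ≥ δ₀. Then ∫_X δ₀^τ / (δ₀ + ρ(x,y))^{m+τ} dμ(x) ≤ C·A, where C depends only on m and τ. -/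
open MeasureTheory Metric ENNReal

private lemma schur_key_aux (m τ δ₀ : ℝ) (hδ : 0 < δ₀) (k : ℕ) :
    δ₀ ^ τ / ((2:ℝ) ^ k * δ₀ / 2) ^ (m + τ) * ((2:ℝ) ^ k * δ₀) ^ m
      = 2 ^ (m + τ) * ((2:ℝ) ^ (-τ)) ^ k := by
  have ha : (0:ℝ) < 2 ^ k := by positivity
  have h1 : ((2:ℝ) ^ k * δ₀ / 2) ^ (m + τ)
      = ((2:ℝ) ^ k * δ₀) ^ (m + τ) / 2 ^ (m + τ) :=
    Real.div_rpow (by positivity) (by norm_num : (0:ℝ) ≤ 2) (m + τ)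
  have h2 : ((2:ℝ) ^ k * δ₀) ^ (m + τ)
      = ((2:ℝ) ^ k * δ₀) ^ m * (((2:ℝ) ^ k) ^ τ * δ₀ ^ τ) := by
    rw [Real.rpow_add (by positivity)]
    congr 1
    exact Real.mul_rpow ha.le hδ.le
  have h3 : ((2:ℝ) ^ (-τ)) ^ k = (((2:ℝ) ^ k) ^ τ)⁻¹ := by
    rw [← Real.rpow_natCast ((2:ℝ) ^ (-τ)) k, ← Real.rpow_natCast (2:ℝ) k,
      ← Real.rpow_mul (by norm_num), ← Real.rpow_mul (by norm_num),
      ← Real.rpow_neg (by norm_num)]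
    ring_nf
  rw [h1, h2, h3]
  have hb : (0:ℝ) < ((2:ℝ) ^ k * δ₀) ^ m := by positivity
  have hc : (0:ℝ) < ((2:ℝ) ^ k) ^ τ := by positivity
  have hd : (0:ℝ) < δ₀ ^ τ := by positivity
  have he : (0:ℝ) < (2:ℝ) ^ (m + τ) := by positivity
  field_simp

/-- Schur-test estimate: if all balls centered at `y` of radius at least `δ₀` satisfy
`μ(B(y,r)) ≤ A·r^m`, then `∫ δ₀^τ/(δ₀ + ρ(x,y))^{m+τ} dμ(x) ≤ C·A` with `C = C(m,τ)`. -/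
theorem schur_test_estimate (m τ : ℝ) (hm : 0 < m) (hτ : 0 < τ) :
    ∃ C : ℝ, 0 < C ∧
      ∀ (X : Type) [MetricSpace X] [MeasurableSpace X] [BorelSpace X]
        (μ : Measure X) (A δ₀ : ℝ) (y : X),
        0 < A → 0 < δ₀ →
        (∀ r : ℝ, δ₀ ≤ r → μ (ball y r) ≤ ENNReal.ofReal (A * r ^ m)) →
        ∫⁻ x, ENNReal.ofReal (δ₀ ^ τ / (δ₀ + dist x y) ^ (m + τ)) ∂μ ≤
          ENNReal.ofReal (C * A) := by
  have h2τpos : (0:ℝ) < 2 ^ (-τ) := Real.rpow_pos_of_pos two_pos _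
  have h2τlt : (2:ℝ) ^ (-τ) < 1 :=
    Real.rpow_lt_one_of_one_lt_of_neg one_lt_two (neg_neg_of_pos hτ)
  have hden : (0:ℝ) < 1 - 2 ^ (-τ) := by linarith
  refine ⟨2 ^ (m + τ) * (1 - 2 ^ (-τ))⁻¹,
    mul_pos (Real.rpow_pos_of_pos two_pos _) (inv_pos.2 hden), ?_⟩
  intro X _ _ _ μ A δ₀ y hA hδ hball
  set f : X → ℝ≥0∞ := fun x => ENNReal.ofReal (δ₀ ^ τ / (δ₀ + dist x y) ^ (m + τ)) with hf
  set S : ℕ → Set X := fun k =>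
    Nat.casesOn k (ball y δ₀) (fun j => ball y (2 ^ (j + 1) * δ₀) \ ball y (2 ^ j * δ₀))
    with hS
  have hSmeas : ∀ k, MeasurableSet (S k) := by
    intro k
    cases k with
    | zero => exact measurableSet_ball
    | succ j => exact measurableSet_ball.diff measurableSet_ball
  have hSsub : ∀ k, S k ⊆ ball y (2 ^ k * δ₀) := by
    intro k
    cases k with
    | zero => simp [hS]
    | succ j => exact Set.diff_subset
  have hSdist : ∀ k, ∀ x ∈ S k, 2 ^ k * δ₀ / 2 ≤ δ₀ + dist x y := by
    intro k x hx
    cases k with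
    | zero =>
      have := dist_nonneg (x := x) (y := y)
      simp only [pow_zero, one_mul]
      linarith
    | succ j =>
      have h1 : ¬ dist x y < 2 ^ j * δ₀ := fun h => hx.2 (mem_ball.2 h)
      push_neg at h1
      have : (2:ℝ) ^ (j + 1) * δ₀ / 2 = 2 ^ j * δ₀ := by ring
      rw [this]
      linarith
  have hcover : (Set.univ : Set X) ⊆ ⋃ k, S k := by
    intro x _
    obtain ⟨n, hn⟩ : ∃ n : ℕ, dist x y < 2 ^ n * δ₀ := by
      obtain ⟨n, hn⟩ := pow_unbounded_of_one_lt (dist x y / δ₀) one_lt_two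
      exact ⟨n, by rwa [div_lt_iff₀ hδ] at hn⟩
    clear hball
    induction n with
    | zero =>
      exact Set.mem_iUnion.2 ⟨0, mem_ball.2 (by simpa using hn)⟩
    | succ j ih =>
      by_cases h : dist x y < 2 ^ j * δ₀
      · exact ih h
      · push_neg at h
        exact Set.mem_iUnion.2 ⟨j + 1, mem_ball.2 hn, fun hc => absurd (mem_ball.1 hc) (not_lt.2 h)⟩
  have hbound : ∀ k : ℕ, ∫⁻ x in S k, f x ∂μ
      ≤ ENNReal.ofReal (A * 2 ^ (m + τ)) * ENNReal.ofReal ((2:ℝ) ^ (-τ)) ^ k := by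
    intro k
    have hr : δ₀ ≤ 2 ^ k * δ₀ :=
      le_mul_of_one_le_left hδ.le (one_le_pow₀ one_le_two)
    have hrpos : (0:ℝ) < 2 ^ k * δ₀ / 2 := by positivity
    calc ∫⁻ x in S k, f x ∂μ
        ≤ ∫⁻ _ in S k, ENNReal.ofReal (δ₀ ^ τ / (2 ^ k * δ₀ / 2) ^ (m + τ)) ∂μ := by
          apply setLIntegral_mono' (hSmeas k)
          intro x hx
          apply ENNReal.ofReal_le_ofReal
          have h0 : (0:ℝ) < 2 ^ k * δ₀ / 2 := by positivity
          gcongr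
          exact hSdist k x hx
      _ = ENNReal.ofReal (δ₀ ^ τ / (2 ^ k * δ₀ / 2) ^ (m + τ)) * μ (S k) :=
          setLIntegral_const _ _
      _ ≤ ENNReal.ofReal (δ₀ ^ τ / (2 ^ k * δ₀ / 2) ^ (m + τ))
            * ENNReal.ofReal (A * (2 ^ k * δ₀) ^ m) :=
          mul_le_mul_right (le_trans (measure_mono (hSsub k)) (hball _ hr)) _
      _ = ENNReal.ofReal (δ₀ ^ τ / (2 ^ k * δ₀ / 2) ^ (m + τ) * (A * (2 ^ k * δ₀) ^ m)) :=
          (ENNReal.ofReal_mul (by positivity)).symm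
      _ = ENNReal.ofReal (A * 2 ^ (m + τ)) * ENNReal.ofReal ((2:ℝ) ^ (-τ)) ^ k := by
          rw [← ENNReal.ofReal_pow h2τpos.le, ← ENNReal.ofReal_mul (by positivity)]
          congr 1
          have := schur_key_aux m τ δ₀ hδ k
          nlinarith [this]
  have hU : (⋃ k, S k) = Set.univ := Set.eq_univ_of_univ_subset hcover
  calc ∫⁻ x, f x ∂μ = ∫⁻ x in ⋃ k, S k, f x ∂μ := by rw [hU, setLIntegral_univ]
    _ ≤ ∑' k, ∫⁻ x in S k, f x ∂μ := lintegral_iUnion_le _ _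
    _ ≤ ∑' k, ENNReal.ofReal (A * 2 ^ (m + τ)) * ENNReal.ofReal ((2:ℝ) ^ (-τ)) ^ k :=
        ENNReal.tsum_le_tsum hbound
    _ = ENNReal.ofReal (A * 2 ^ (m + τ)) * (1 - ENNReal.ofReal ((2:ℝ) ^ (-τ)))⁻¹ := by
        rw [ENNReal.tsum_mul_left, ENNReal.tsum_geometric]
    _ = ENNReal.ofReal ((2 ^ (m + τ) * (1 - 2 ^ (-τ))⁻¹) * A) := by
        rw [← ENNReal.ofReal_one, ← ENNReal.ofReal_sub _ h2τpos.le,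
          ← ENNReal.ofReal_inv_of_pos hden, ← ENNReal.ofReal_mul (by positivity)]
        congr 1
        ring
end

section
/- Let (X,ρ) be a metric space, μ a Borel measure on X, κ ∈ (0,1), and m, τ, A > 0. For each j ∈ ℤ let 𝒬_j and ℛ_j be countable families of pairwise disjoint Borel subsets of X, each set having positive finite μ-measure and diameter at most κ^j, and suppose that for every Q ∈ 𝒬_j and every x ∈ Q one has μ(B(x,r)) ≤ A·r^m for all r ≥ κ^j, and likewise for every R ∈ ℛ_j and every y ∈ R. For Q ∈ 𝒬_i and R ∈ ℛ_j with i ≥ j set s(Q) := κ^i, s(R) := κ^j, D(Q,R) := s(Q) + s(R) + dist(Q,R), and T_{Q,R} := s(Q)^{τ/2} s(R)^{τ/2} D(Q,R)^{−(m+τ)} √(μ(Q)μ(R)). Then for all families of nonnegative numbers (a_Q)_{Q ∈ ⋃_i 𝒬_i} and (b_R)_{R ∈ ⋃_j ℛ_j}: Σ_{i ≥ j} Σ_{Q ∈ 𝒬_i, R ∈ ℛ_j} T_{Q,R} a_Q b_R ≤ C · (Σ_Q a_Q²)^{1/2} (Σ_R b_R²)^{1/2}, where C depends only on A, m, τ,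 κ. -/
open MeasureTheory Metric
open scoped ENNReal NNReal

section setDistLemmas
variable {X : Type*} [MetricSpace X] {S T : Set X} {x y : X}

lemma setDist_bddBelow (S T : Set X) : BddBelow (Set.image2 dist S T) :=
  ⟨0, by rintro d ⟨a, _, b, _, rfl⟩; exact dist_nonneg⟩

lemma setDist_nonneg (S T : Set X) : 0 ≤ setDist S T :=
  Real.sInf_nonneg (by rintro d ⟨a, _, b, _, rfl⟩; exact dist_nonneg)

lemma setDist_le_dist (hx : x ∈ S) (hy : y ∈ T) : setDist S T ≤ dist x y :=
  csInf_le (setDist_bddBelow S T) (Set.mem_image2_of_mem hx hy)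

lemma setDist_comm (S T : Set X) : setDist S T = setDist T S := by
  unfold setDist
  rw [← Set.image2_swap]
  simp [dist_comm]

lemma exists_dist_lt_of_setDist_lt (hS : S.Nonempty) (hT : T.Nonempty) {t : ℝ}
    (h : setDist S T < t) : ∃ x ∈ S, ∃ y ∈ T, dist x y < t := by
  have hne : (Set.image2 dist S T).Nonempty := Set.Nonempty.image2 hS hT
  obtain ⟨d, hd, hdt⟩ := (csInf_lt_iff (setDist_bddBelow S T) hne).1 h
  obtain ⟨a, ha, b, hb, rfl⟩ := hd
  exact ⟨a, ha, b, hb, hdt⟩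

lemma setDist_singleton_le (hT : T.Nonempty) (hx : x ∈ S) {δ' : ℝ} (hδ' : 0 ≤ δ')
    (hdiam : EMetric.diam S ≤ ENNReal.ofReal δ') :
    setDist {x} T ≤ δ' + setDist S T := by
  by_contra hcon
  push_neg at hcon
  set ε := (setDist {x} T - (δ' + setDist S T)) / 2 with hε
  have hεpos : 0 < ε := by simp only [hε]; linarith
  obtain ⟨x', hx', y, hy, hxy⟩ :=
    exists_dist_lt_of_setDist_lt ⟨x, hx⟩ hT (lt_add_of_pos_right (setDist S T) hεpos)
  have hdx : dist x x' ≤ δ' := by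
    have h1 : edist x x' ≤ ENNReal.ofReal δ' := le_trans (EMetric.edist_le_diam_of_mem hx hx') hdiam
    rw [edist_dist] at h1
    exact (ENNReal.ofReal_le_ofReal_iff hδ').1 h1
  have h2 : setDist {x} T ≤ dist x y := setDist_le_dist rfl hy
  have h3 : dist x y ≤ dist x x' + dist x' y := dist_triangle _ _ _
  have : setDist {x} T ≤ δ' + (setDist S T + ε) := by linarith
  simp only [hε] at this
  linarith

end setDistLemmas


lemma tsum_holder {ι : Type*} (f g : ι → ℝ≥0∞) :
    ∑' i, f i * g i ≤ (∑' i, f i ^ (2:ℝ)) ^ ((1:ℝ)/2) * (∑' i, g i ^ (2:ℝ)) ^ ((1:ℝ)/2) := by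
  rw [ENNReal.tsum_eq_iSup_sum]
  refine iSup_le fun s => ?_
  have hpq : (2:ℝ).HolderConjugate 2 := Real.HolderConjugate.two_two
  refine le_trans (ENNReal.inner_le_Lp_mul_Lq s f g hpq) ?_
  exact mul_le_mul' (ENNReal.rpow_le_rpow (ENNReal.sum_le_tsum s) (by norm_num))
    (ENNReal.rpow_le_rpow (ENNReal.sum_le_tsum s) (by norm_num))

lemma tsum_int_le_geom_down {F : ℤ → ℝ≥0∞} {q c : ℝ≥0∞} {i₀ : ℤ}
    (hF : ∀ n, F n ≤ if n ≤ i₀ then c * q ^ (i₀ - n).toNat else 0) :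
    ∑' n : ℤ, F n ≤ c * (1 - q)⁻¹ := by
  set G : ℤ → ℝ≥0∞ := fun n => if n ≤ i₀ then c * q ^ (i₀ - n).toNat else 0 with hG
  have h1 : ∑' n : ℤ, F n ≤ ∑' n : ℤ, G n := ENNReal.tsum_le_tsum hF
  have hinj : Function.Injective (fun k : ℕ => i₀ - k) := by
    intro k k' h
    simp only at h
    omega
  have hsupp : Function.support G ⊆ Set.range (fun k : ℕ => i₀ - k) := by
    intro n hn
    simp only [Function.mem_support, hG] at hn
    by_cases h : n ≤ i₀
    · exact ⟨(i₀ - n).toNat, by simp only; omega⟩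
    · simp [h] at hn
  have h2 : ∑' k : ℕ, G (i₀ - k) = ∑' n : ℤ, G n := hinj.tsum_eq hsupp
  have h3 : ∀ k : ℕ, G (i₀ - k) = c * q ^ k := by
    intro k
    simp only [hG, if_pos (by omega : i₀ - (k:ℤ) ≤ i₀)]
    congr 1
    congr 1
    omega
  calc ∑' n : ℤ, F n ≤ ∑' n : ℤ, G n := h1
    _ = ∑' k : ℕ, G (i₀ - k) := h2.symm
    _ = ∑' k : ℕ, c * q ^ k := by exact tsum_congr h3
    _ = c * ∑' k : ℕ, q ^ k := ENNReal.tsum_mul_left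
    _ = c * (1 - q)⁻¹ := by rw [ENNReal.tsum_geometric]

lemma tsum_int_le_geom_up {F : ℤ → ℝ≥0∞} {q c : ℝ≥0∞} {n₀ : ℤ}
    (hF : ∀ n, F n ≤ if n₀ ≤ n then c * q ^ (n - n₀).toNat else 0) :
    ∑' n : ℤ, F n ≤ c * (1 - q)⁻¹ := by
  set G : ℤ → ℝ≥0∞ := fun n => if n₀ ≤ n then c * q ^ (n - n₀).toNat else 0 with hG
  have h1 : ∑' n : ℤ, F n ≤ ∑' n : ℤ, G n := ENNReal.tsum_le_tsum hF
  have hinj : Function.Injective (fun k : ℕ => n₀ + k) := by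
    intro k k' h
    simp only at h
    omega
  have hsupp : Function.support G ⊆ Set.range (fun k : ℕ => n₀ + k) := by
    intro n hn
    simp only [Function.mem_support, hG] at hn
    by_cases h : n₀ ≤ n
    · exact ⟨(n - n₀).toNat, by simp only; omega⟩
    · simp [h] at hn
  have h2 : ∑' k : ℕ, G (n₀ + k) = ∑' n : ℤ, G n := hinj.tsum_eq hsupp
  have h3 : ∀ k : ℕ, G (n₀ + k) = c * q ^ k := by
    intro k
    simp only [hG, if_pos (by omega : n₀ ≤ n₀ + (k:ℤ))]
    congr 1
    congr 1
    omega
  calc ∑' n : ℤ, F n ≤ ∑' n : ℤ, G n := h1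
    _ = ∑' k : ℕ, G (n₀ + k) := h2.symm
    _ = ∑' k : ℕ, c * q ^ k := tsum_congr h3
    _ = c * ∑' k : ℕ, q ^ k := ENNReal.tsum_mul_left
    _ = c * (1 - q)⁻¹ := by rw [ENNReal.tsum_geometric]

lemma calc_real {m τ δ A : ℝ} (hm : 0 < m) (hτ : 0 < τ) (hδ : 0 < δ) (hA : 0 < A) (k : ℕ) :
    ((2:ℝ) ^ k * δ / 2) ^ (-(m + τ)) * (A * ((2:ℝ) ^ (k + 3) * δ) ^ m) =
      A * 2 ^ (4 * m + τ) * δ ^ (-τ) * ((2:ℝ) ^ (-τ)) ^ k := by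
  have h2 : (0:ℝ) < 2 := two_pos
  have e1 : ((2:ℝ) ^ k * δ / 2) = 2 ^ ((k:ℝ) - 1) * δ := by
    rw [Real.rpow_sub h2, Real.rpow_natCast, Real.rpow_one]; ring
  have e2 : ((2:ℝ) ^ (k + 3) * δ) = 2 ^ ((k:ℝ) + 3) * δ := by
    rw [show ((k:ℝ) + 3) = ((k + 3 : ℕ) : ℝ) by push_cast; ring, Real.rpow_natCast]
  rw [e1, e2]
  rw [Real.mul_rpow (Real.rpow_nonneg h2.le _) hδ.le,
      Real.mul_rpow (Real.rpow_nonneg h2.le _) hδ.le,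
      ← Real.rpow_natCast ((2:ℝ) ^ (-τ)) k, ← Real.rpow_mul h2.le,
      ← Real.rpow_mul h2.le, ← Real.rpow_mul h2.le]
  have h3 : A * 2 ^ (4 * m + τ) * δ ^ (-τ) * 2 ^ (-τ * (k:ℝ)) =
      (2 ^ (4 * m + τ) * 2 ^ (-τ * (k:ℝ))) * (A * δ ^ (-τ)) := by ring
  rw [h3, ← Real.rpow_add h2]
  have h4 : 2 ^ (((k:ℝ) - 1) * -(m + τ)) * δ ^ (-(m + τ)) * (A * (2 ^ (((k:ℝ) + 3) * m) * δ ^ m)) =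
      (2 ^ (((k:ℝ) - 1) * -(m + τ)) * 2 ^ (((k:ℝ) + 3) * m)) * (A * (δ ^ (-(m + τ)) * δ ^ m)) := by
    ring
  rw [h4, ← Real.rpow_add h2, ← Real.rpow_add hδ]
  congr 2
  · ring
  · congr 1
    ring

lemma packing_lemma {X : Type} [MetricSpace X] [MeasurableSpace X] [BorelSpace X] (μ : Measure X)
    {m τ A : ℝ} (hm : 0 < m) (hτ : 0 < τ) (hA : 0 < A)
    {ι : Type} [Countable ι] (S : ι → Set X) (hmeas : ∀ l, MeasurableSet (S l))
    (hdisj : Pairwise (Function.onFun Disjoint S)) (hne : ∀ l, (S l).Nonempty)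
    {δ : ℝ} (hδ : 0 < δ) (hdiam : ∀ l, EMetric.diam (S l) ≤ ENNReal.ofReal δ)
    (hgrow : ∀ l, ∀ y ∈ S l, ∀ r : ℝ, δ ≤ r → μ (ball y r) ≤ ENNReal.ofReal (A * r ^ m))
    (x : X) :
    ∑' l, μ (S l) * ENNReal.ofReal ((δ + setDist {x} (S l)) ^ (-(m + τ))) ≤
      ENNReal.ofReal (A * 2 ^ (4 * m + τ) / (1 - 2 ^ (-τ)) * δ ^ (-τ)) := by
  classical
  set d : ι → ℝ := fun l => setDist {x} (S l) with hd
  have hd0 : ∀ l, 0 ≤ d l := fun l => setDist_nonneg _ _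
  have hK : ∀ l, ∃ k : ℕ, d l < 2 ^ k * δ := by
    intro l
    obtain ⟨k, hk⟩ := pow_unbounded_of_one_lt (d l / δ) one_lt_two
    refine ⟨k, ?_⟩
    rw [div_lt_iff₀ hδ] at hk
    linarith [hk]
  set K : ι → ℕ := fun l => Nat.find (hK l) with hKdef
  set f : ι → ℝ≥0∞ := fun l => μ (S l) * ENNReal.ofReal ((δ + d l) ^ (-(m + τ))) with hf
  have hdspec : ∀ l, d l < 2 ^ (K l) * δ := fun l => Nat.find_spec (hK l)
  set q : ℝ≥0∞ := ENNReal.ofReal ((2:ℝ) ^ (-τ)) with hq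
  set c1 : ℝ := A * 2 ^ (4 * m + τ) * δ ^ (-τ) with hc1
  have key : ∀ k : ℕ, (∑' l : {l // K l = k}, f l.1) ≤ ENNReal.ofReal c1 * q ^ k := by
    intro k
    rcases isEmpty_or_nonempty {l // K l = k} with hE | hE
    · rw [tsum_empty]; exact zero_le
    obtain ⟨⟨l₀, hl₀⟩⟩ := hE
    have hdl₀ : d l₀ < 2 ^ k * δ := hl₀ ▸ hdspec l₀
    obtain ⟨x', hx', y₀, hy₀, hxy₀⟩ :=
      exists_dist_lt_of_setDist_lt (Set.singleton_nonempty x) (hne l₀) hdl₀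
    rw [Set.mem_singleton_iff] at hx'
    rw [hx'] at hxy₀
    -- diameter bound as dist bound
    have hdiam' : ∀ l, ∀ y ∈ S l, ∀ z ∈ S l, dist y z ≤ δ := by
      intro l y hy z hz
      have h1 : edist y z ≤ ENNReal.ofReal δ :=
        le_trans (EMetric.edist_le_diam_of_mem hy hz) (hdiam l)
      rw [edist_dist] at h1
      exact (ENNReal.ofReal_le_ofReal_iff hδ.le).1 h1
    have hsub : ∀ l : {l // K l = k}, S l.1 ⊆ ball y₀ ((2:ℝ) ^ (k + 3) * δ) := by
      rintro ⟨l, hl⟩ z hz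
      have hdl : d l < 2 ^ k * δ := hl ▸ hdspec l
      obtain ⟨x'', hx'', y, hy, hxy⟩ :=
        exists_dist_lt_of_setDist_lt (Set.singleton_nonempty x) (hne l) hdl
      rw [Set.mem_singleton_iff] at hx''
      rw [hx''] at hxy
      have hyz : dist y z ≤ δ := hdiam' l y hy z hz
      have h1 : dist z y₀ ≤ dist z y + dist y x + dist x y₀ := dist_triangle4 z y x y₀
      have hpk : (1:ℝ) ≤ 2 ^ k := one_le_pow₀ one_le_two
      have h8 : (2:ℝ) ^ (k + 3) = 8 * 2 ^ k := by rw [pow_add]; ring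
      rw [mem_ball]
      have hchain : dist z y₀ < δ + 2 ^ k * δ + 2 ^ k * δ := by
        have e1 : dist z y = dist y z := dist_comm z y
        have e2 : dist y x = dist x y := dist_comm y x
        linarith [h1, hyz, hxy, hxy₀]
      rw [h8]
      nlinarith [hpk, hδ.le]
    -- disjointness on the fiber
    have hdisj' : Pairwise (Function.onFun Disjoint fun l : {l // K l = k} => S l.1) :=
      fun l l' hll' => hdisj (Subtype.coe_injective.ne_iff.2 hll' : l.1 ≠ l'.1)
    have hsum : (∑' l : {l // K l = k}, μ (S l.1)) ≤ ENNReal.ofReal (A * ((2:ℝ) ^ (k+3) * δ) ^ m) := by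
      rw [← measure_iUnion hdisj' (fun l => hmeas l.1)]
      refine le_trans (measure_mono (Set.iUnion_subset hsub)) ?_
      refine hgrow l₀ y₀ hy₀ _ ?_
      have hpk : (1:ℝ) ≤ 2 ^ (k+3) := one_le_pow₀ one_le_two
      nlinarith [hδ.le]
    have hpos2' : (0:ℝ) < 2 ^ k * δ / 2 := by positivity
    have hterm : ∀ l : {l // K l = k},
        f l.1 ≤ ENNReal.ofReal (((2:ℝ) ^ k * δ / 2) ^ (-(m + τ))) * μ (S l.1) := by
      rintro ⟨l, hl⟩
      have hlow : (2:ℝ) ^ k * δ / 2 ≤ δ + d l := by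
        rcases Nat.eq_zero_or_pos k with h0 | hposk
        · subst h0; simp only [pow_zero, one_mul]; linarith [hd0 l]
        · have hmin : ¬ d l < 2 ^ (k - 1) * δ := by
            have := Nat.find_min (hK l) (show k - 1 < K l by omega)
            exact this
          push_neg at hmin
          have h2k : (2:ℝ) ^ k = 2 ^ (k - 1) * 2 := by
            rw [← pow_succ]
            congr 1
            omega
          rw [h2k]
          linarith [hmin]
      have hpos2 : (0:ℝ) < 2 ^ k * δ / 2 := by positivity
      have hr : ((δ + d l) : ℝ) ^ (-(m + τ)) ≤ ((2:ℝ) ^ k * δ / 2) ^ (-(m + τ)) :=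
        Real.rpow_le_rpow_of_nonpos hpos2 hlow (by linarith)
      calc f l = μ (S l) * ENNReal.ofReal ((δ + d l) ^ (-(m + τ))) := rfl
        _ ≤ μ (S l) * ENNReal.ofReal (((2:ℝ) ^ k * δ / 2) ^ (-(m + τ))) :=
            mul_le_mul' le_rfl (ENNReal.ofReal_le_ofReal hr)
        _ = ENNReal.ofReal (((2:ℝ) ^ k * δ / 2) ^ (-(m + τ))) * μ (S l) := mul_comm _ _
    calc (∑' l : {l // K l = k}, f l.1)
        ≤ ∑' l : {l // K l = k}, ENNReal.ofReal (((2:ℝ) ^ k * δ / 2) ^ (-(m + τ))) * μ (S l.1) :=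
          ENNReal.tsum_le_tsum hterm
      _ = ENNReal.ofReal (((2:ℝ) ^ k * δ / 2) ^ (-(m + τ))) * ∑' l : {l // K l = k}, μ (S l.1) :=
          ENNReal.tsum_mul_left
      _ ≤ ENNReal.ofReal (((2:ℝ) ^ k * δ / 2) ^ (-(m + τ))) *
            ENNReal.ofReal (A * ((2:ℝ) ^ (k+3) * δ) ^ m) := mul_le_mul' le_rfl hsum
      _ = ENNReal.ofReal ((((2:ℝ) ^ k * δ / 2) ^ (-(m + τ))) * (A * ((2:ℝ) ^ (k+3) * δ) ^ m)) :=
          (ENNReal.ofReal_mul (Real.rpow_nonneg hpos2'.le _)).symm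
      _ = ENNReal.ofReal (c1 * ((2:ℝ) ^ (-τ)) ^ k) := by
          rw [calc_real hm hτ hδ hA k, hc1]
      _ = ENNReal.ofReal c1 * q ^ k := by
          rw [ENNReal.ofReal_mul (by positivity), ENNReal.ofReal_pow (by positivity)]
  have h2τlt : (2:ℝ) ^ (-τ) < 1 := Real.rpow_lt_one_of_one_lt_of_neg one_lt_two (by linarith)
  have h2τ0 : (0:ℝ) < 2 ^ (-τ) := Real.rpow_pos_of_pos two_pos _
  calc (∑' l, f l)
      = ∑' σ : (Σ k : ℕ, {l // K l = k}), f ((Equiv.sigmaFiberEquiv K) σ) :=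
        ((Equiv.sigmaFiberEquiv K).tsum_eq f).symm
    _ = ∑' (k : ℕ), ∑' (l : {l // K l = k}), f ((Equiv.sigmaFiberEquiv K) ⟨k, l⟩) :=
        ENNReal.tsum_sigma' _
    _ = ∑' (k : ℕ), ∑' (l : {l // K l = k}), f l.1 :=
        tsum_congr fun k => tsum_congr fun l => rfl
    _ ≤ ∑' (k : ℕ), ENNReal.ofReal c1 * q ^ k := ENNReal.tsum_le_tsum key
    _ = ENNReal.ofReal c1 * ∑' k : ℕ, q ^ k := ENNReal.tsum_mul_left
    _ = ENNReal.ofReal c1 * (1 - q)⁻¹ := by rw [ENNReal.tsum_geometric]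
    _ = ENNReal.ofReal (A * 2 ^ (4 * m + τ) / (1 - 2 ^ (-τ)) * δ ^ (-τ)) := by
        have hq1 : (1:ℝ≥0∞) - q = ENNReal.ofReal (1 - 2 ^ (-τ)) := by
          rw [hq, ENNReal.ofReal_sub 1 h2τ0.le, ENNReal.ofReal_one]
        have hc1nn : (0:ℝ) ≤ c1 := by rw [hc1]; positivity
        have hreal : c1 * (1 - 2 ^ (-τ))⁻¹ = A * 2 ^ (4 * m + τ) / (1 - 2 ^ (-τ)) * δ ^ (-τ) := by
          rw [hc1, div_eq_mul_inv]; ring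
        rw [hq1, ← ENNReal.ofReal_inv_of_pos (by linarith), ← ENNReal.ofReal_mul hc1nn, hreal]

lemma inv_le_mul_inv {a b c : ℝ} (ha : 0 < a) (hc : 0 < c) (h : a ≤ c * b) : b⁻¹ ≤ c * a⁻¹ := by
  have hb : 0 < b := by nlinarith
  calc b⁻¹ = 1 / b := (one_div b).symm
    _ ≤ c / a := by rw [div_le_div_iff₀ hb ha]; linarith
    _ = c * a⁻¹ := div_eq_mul_inv c a

lemma kappa_calc {κ τ : ℝ} (hκ0 : 0 < κ) (hτ : 0 < τ) {i₀ n : ℤ} (h : n ≤ i₀) (c : ℝ) :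
    (κ ^ i₀) ^ (τ / 2) * (κ ^ n) ^ (τ / 2) * (c * (κ ^ n) ^ (-τ)) =
      c * (κ ^ (τ / 2)) ^ (i₀ - n).toNat := by
  have hz : ∀ j : ℤ, (κ : ℝ) ^ j = κ ^ (j : ℝ) := fun j => (Real.rpow_intCast κ j).symm
  rw [hz i₀, hz n, ← Real.rpow_mul hκ0.le, ← Real.rpow_mul hκ0.le, ← Real.rpow_mul hκ0.le]
  rw [← Real.rpow_natCast (κ ^ (τ / 2)) (i₀ - n).toNat, ← Real.rpow_mul hκ0.le]
  have hton : (((i₀ - n).toNat : ℕ) : ℝ) = ((i₀ : ℝ) - n) := by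
    rw [show (((i₀ - n).toNat : ℕ) : ℝ) = (((i₀ - n).toNat : ℤ) : ℝ) by push_cast; ring]
    rw [Int.toNat_of_nonneg (by omega)]
    push_cast; ring
  rw [hton]
  have e : κ ^ ((i₀:ℝ) * (τ / 2)) * κ ^ ((n:ℝ) * (τ / 2)) * (c * κ ^ ((n:ℝ) * -τ)) =
      c * (κ ^ ((i₀:ℝ) * (τ / 2)) * κ ^ ((n:ℝ) * (τ / 2)) * κ ^ ((n:ℝ) * -τ)) := by ring
  rw [e, ← Real.rpow_add hκ0, ← Real.rpow_add hκ0]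
  congr 2
  ring

lemma row_bound {X : Type} [MetricSpace X] [MeasurableSpace X] [BorelSpace X] (μ : Measure X)
    {m τ A κ : ℝ} (hm : 0 < m) (hτ : 0 < τ) (hA : 0 < A) (hκ0 : 0 < κ) (hκ1 : κ < 1)
    {ιR : Type} [Countable ιR] (Rs : ιR → Set X) (gR : ιR → ℤ)
    (hRmeas : ∀ j, MeasurableSet (Rs j))
    (hRdisj : ∀ j j', j ≠ j' → gR j = gR j' → Disjoint (Rs j) (Rs j'))
    (hRpos : ∀ j, 0 < μ (Rs j))
    (hRdiam : ∀ j, EMetric.diam (Rs j) ≤ ENNReal.ofReal (κ ^ gR j))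
    (hRgrow : ∀ j, ∀ y ∈ Rs j, ∀ r : ℝ, κ ^ gR j ≤ r → μ (ball y r) ≤ ENNReal.ofReal (A * r ^ m))
    (Q : Set X) (i₀ : ℤ) (hQne : Q.Nonempty)
    (hQdiam : EMetric.diam Q ≤ ENNReal.ofReal (κ ^ i₀)) :
    (∑' j, if gR j ≤ i₀ then
        ENNReal.ofReal ((κ ^ i₀) ^ (τ / 2) * (κ ^ gR j) ^ (τ / 2) /
          (κ ^ i₀ + κ ^ gR j + setDist Q (Rs j)) ^ (m + τ)) * μ (Rs j)
      else 0) ≤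
      ENNReal.ofReal (2 ^ (m + τ) * (A * 2 ^ (4 * m + τ) / (1 - 2 ^ (-τ))) / (1 - κ ^ (τ / 2))) := by
  classical
  obtain ⟨x, hx⟩ := hQne
  have h2τlt : (2:ℝ) ^ (-τ) < 1 := Real.rpow_lt_one_of_one_lt_of_neg one_lt_two (by linarith)
  have h2τ0 : (0:ℝ) < 2 ^ (-τ) := Real.rpow_pos_of_pos two_pos _
  set CA : ℝ := A * 2 ^ (4 * m + τ) / (1 - 2 ^ (-τ)) with hCA
  have hCApos : 0 < CA := by
    rw [hCA]; exact div_pos (by positivity) (by linarith)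
  have hκτ1 : κ ^ (τ / 2) < 1 := Real.rpow_lt_one hκ0.le hκ1 (by linarith)
  have hκτ0 : (0:ℝ) < κ ^ (τ / 2) := Real.rpow_pos_of_pos hκ0 _
  set q : ℝ≥0∞ := ENNReal.ofReal (κ ^ (τ / 2)) with hq
  set F : ιR → ℝ≥0∞ := fun j => if gR j ≤ i₀ then
      ENNReal.ofReal ((κ ^ i₀) ^ (τ / 2) * (κ ^ gR j) ^ (τ / 2) /
        (κ ^ i₀ + κ ^ gR j + setDist Q (Rs j)) ^ (m + τ)) * μ (Rs j)
    else 0 with hF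
  have hRne : ∀ j, (Rs j).Nonempty := fun j => nonempty_of_measure_ne_zero (hRpos j).ne'
  have key : ∀ n : ℤ, (∑' j : {j // gR j = n}, F j.1) ≤
      (if n ≤ i₀ then ENNReal.ofReal CA * q ^ (i₀ - n).toNat else 0) := by
    intro n
    by_cases hn : n ≤ i₀
    swap
    · rw [if_neg hn]
      have hz : ∀ j : {j // gR j = n}, F j.1 = 0 := by
        rintro ⟨j, hj⟩
        simp only [hF, hj, if_neg hn]
      rw [tsum_congr hz, tsum_zero]
    rw [if_pos hn]
    have hterm : ∀ j : {j // gR j = n}, F j.1 ≤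
        ENNReal.ofReal ((κ ^ i₀) ^ (τ / 2) * (κ ^ n) ^ (τ / 2)) *
          (μ (Rs j.1) * ENNReal.ofReal ((κ ^ n + setDist {x} (Rs j.1)) ^ (-(m + τ)))) := by
      rintro ⟨j, hj⟩
      simp only [hF, hj, if_pos hn]
      have hd0 : 0 ≤ setDist {x} (Rs j) := setDist_nonneg _ _
      have hdQ : setDist {x} (Rs j) ≤ κ ^ i₀ + setDist Q (Rs j) :=
        setDist_singleton_le (hRne j) hx (le_of_lt (zpow_pos hκ0 i₀)) hQdiam
      have hbase : (0:ℝ) < κ ^ n + setDist {x} (Rs j) :=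
        add_pos_of_pos_of_nonneg (zpow_pos hκ0 n) hd0
      have hDge : κ ^ n + setDist {x} (Rs j) ≤ 1 * (κ ^ i₀ + κ ^ n + setDist Q (Rs j)) := by
        rw [one_mul]; linarith
      have hs12 : (0:ℝ) ≤ (κ ^ i₀) ^ (τ / 2) * (κ ^ n) ^ (τ / 2) := by positivity
      have hrpow : ((κ ^ n + setDist {x} (Rs j)) ^ (m + τ) : ℝ) ≤
          1 * ((κ ^ i₀ + κ ^ n + setDist Q (Rs j)) ^ (m + τ)) := by
        rw [one_mul] at hDge ⊢
        exact Real.rpow_le_rpow hbase.le hDge (by linarith)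
      have hinv : (((κ ^ i₀ + κ ^ n + setDist Q (Rs j)) ^ (m + τ) : ℝ))⁻¹ ≤
          1 * (((κ ^ n + setDist {x} (Rs j)) ^ (m + τ) : ℝ))⁻¹ :=
        inv_le_mul_inv (Real.rpow_pos_of_pos hbase _) one_pos hrpow
      rw [one_mul] at hinv
      have hreal : (κ ^ i₀) ^ (τ / 2) * (κ ^ n) ^ (τ / 2) /
            (κ ^ i₀ + κ ^ n + setDist Q (Rs j)) ^ (m + τ) ≤
          (κ ^ i₀) ^ (τ / 2) * (κ ^ n) ^ (τ / 2) *
            (κ ^ n + setDist {x} (Rs j)) ^ (-(m + τ)) := by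
        rw [div_eq_mul_inv, Real.rpow_neg hbase.le]
        exact mul_le_mul_of_nonneg_left hinv hs12
      calc ENNReal.ofReal ((κ ^ i₀) ^ (τ / 2) * (κ ^ n) ^ (τ / 2) /
              (κ ^ i₀ + κ ^ n + setDist Q (Rs j)) ^ (m + τ)) * μ (Rs j)
          ≤ ENNReal.ofReal ((κ ^ i₀) ^ (τ / 2) * (κ ^ n) ^ (τ / 2) *
              (κ ^ n + setDist {x} (Rs j)) ^ (-(m + τ))) * μ (Rs j) :=
            mul_le_mul' (ENNReal.ofReal_le_ofReal hreal) le_rfl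
        _ = ENNReal.ofReal ((κ ^ i₀) ^ (τ / 2) * (κ ^ n) ^ (τ / 2)) *
              ENNReal.ofReal ((κ ^ n + setDist {x} (Rs j)) ^ (-(m + τ))) * μ (Rs j) := by
            rw [ENNReal.ofReal_mul hs12]
        _ = ENNReal.ofReal ((κ ^ i₀) ^ (τ / 2) * (κ ^ n) ^ (τ / 2)) *
              (μ (Rs j) * ENNReal.ofReal ((κ ^ n + setDist {x} (Rs j)) ^ (-(m + τ)))) := by
            rw [mul_assoc]
            congr 1
            rw [mul_comm]
    have hpack : (∑' j : {j // gR j = n},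
        μ (Rs j.1) * ENNReal.ofReal ((κ ^ n + setDist {x} (Rs j.1)) ^ (-(m + τ)))) ≤
        ENNReal.ofReal (A * 2 ^ (4 * m + τ) / (1 - 2 ^ (-τ)) * (κ ^ n) ^ (-τ)) := by
      refine packing_lemma μ hm hτ hA (fun j : {j // gR j = n} => Rs j.1)
        (fun j => hRmeas j.1) ?_ (fun j => hRne j.1) (zpow_pos hκ0 n) ?_ ?_ x
      · rintro j j' hjj'
        exact hRdisj j.1 j'.1 (Subtype.coe_injective.ne_iff.2 hjj') (by rw [j.2, j'.2])
      · rintro ⟨j, hj⟩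
        have hh := hRdiam j
        rw [hj] at hh
        exact hh
      · rintro ⟨j, hj⟩ y hy r hr
        exact hRgrow j y hy r (by rw [hj]; exact hr)
    calc (∑' j : {j // gR j = n}, F j.1)
        ≤ ∑' j : {j // gR j = n}, ENNReal.ofReal ((κ ^ i₀) ^ (τ / 2) * (κ ^ n) ^ (τ / 2)) *
            (μ (Rs j.1) * ENNReal.ofReal ((κ ^ n + setDist {x} (Rs j.1)) ^ (-(m + τ)))) :=
          ENNReal.tsum_le_tsum hterm
      _ = ENNReal.ofReal ((κ ^ i₀) ^ (τ / 2) * (κ ^ n) ^ (τ / 2)) *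
            ∑' j : {j // gR j = n},
              μ (Rs j.1) * ENNReal.ofReal ((κ ^ n + setDist {x} (Rs j.1)) ^ (-(m + τ))) :=
          ENNReal.tsum_mul_left
      _ ≤ ENNReal.ofReal ((κ ^ i₀) ^ (τ / 2) * (κ ^ n) ^ (τ / 2)) *
            ENNReal.ofReal (A * 2 ^ (4 * m + τ) / (1 - 2 ^ (-τ)) * (κ ^ n) ^ (-τ)) :=
          mul_le_mul' le_rfl hpack
      _ = ENNReal.ofReal CA * q ^ (i₀ - n).toNat := by
          rw [← ENNReal.ofReal_mul (by positivity)]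
          rw [show (κ ^ i₀) ^ (τ / 2) * (κ ^ n) ^ (τ / 2) *
              (A * 2 ^ (4 * m + τ) / (1 - 2 ^ (-τ)) * (κ ^ n) ^ (-τ)) =
              CA * (κ ^ (τ / 2)) ^ (i₀ - n).toNat from kappa_calc hκ0 hτ hn CA]
          rw [ENNReal.ofReal_mul hCApos.le, hq, ENNReal.ofReal_pow hκτ0.le]
  have hdecomp : (∑' j, F j) = ∑' n : ℤ, ∑' j : {j // gR j = n}, F j.1 := by
    calc (∑' j, F j)
        = ∑' σ : (Σ n : ℤ, {j // gR j = n}), F ((Equiv.sigmaFiberEquiv gR) σ) :=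
          ((Equiv.sigmaFiberEquiv gR).tsum_eq F).symm
      _ = ∑' (n : ℤ), ∑' (j : {j // gR j = n}), F ((Equiv.sigmaFiberEquiv gR) ⟨n, j⟩) :=
          ENNReal.tsum_sigma' _
      _ = ∑' n : ℤ, ∑' j : {j // gR j = n}, F j.1 :=
          tsum_congr fun n => tsum_congr fun j => rfl
  rw [hdecomp]
  have hgeo : (∑' n : ℤ, ∑' j : {j // gR j = n}, F j.1) ≤ ENNReal.ofReal CA * (1 - q)⁻¹ :=
    tsum_int_le_geom_down key
  refine le_trans hgeo ?_
  have hq1 : (1:ℝ≥0∞) - q = ENNReal.ofReal (1 - κ ^ (τ / 2)) := by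
    rw [hq, ENNReal.ofReal_sub 1 hκτ0.le, ENNReal.ofReal_one]
  rw [hq1, ← ENNReal.ofReal_inv_of_pos (by linarith), ← ENNReal.ofReal_mul hCApos.le]
  apply ENNReal.ofReal_le_ofReal
  have h2mτ : (1:ℝ) ≤ 2 ^ (m + τ) := by
    rw [show (1:ℝ) = (2:ℝ) ^ (0:ℝ) from (Real.rpow_zero 2).symm]
    exact Real.rpow_le_rpow_of_exponent_le one_le_two (by linarith)
  have hinv0 : (0:ℝ) ≤ (1 - κ ^ (τ / 2))⁻¹ := by
    apply inv_nonneg.2; linarith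
  calc CA * (1 - κ ^ (τ / 2))⁻¹ = 1 * (CA * (1 - κ ^ (τ / 2))⁻¹) := (one_mul _).symm
    _ ≤ 2 ^ (m + τ) * (CA * (1 - κ ^ (τ / 2))⁻¹) :=
        mul_le_mul_of_nonneg_right h2mτ (mul_nonneg hCApos.le hinv0)
    _ = 2 ^ (m + τ) * CA / (1 - κ ^ (τ / 2)) := by ring

lemma col_bound {X : Type} [MetricSpace X] [MeasurableSpace X] [BorelSpace X] (μ : Measure X)
    {m τ A κ : ℝ} (hm : 0 < m) (hτ : 0 < τ) (hA : 0 < A) (hκ0 : 0 < κ) (hκ1 : κ < 1)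
    {ιQ : Type} [Countable ιQ] (Qs : ιQ → Set X) (gQ : ιQ → ℤ)
    (hQmeas : ∀ i, MeasurableSet (Qs i))
    (hQdisj : ∀ i i', i ≠ i' → gQ i = gQ i' → Disjoint (Qs i) (Qs i'))
    (hQpos : ∀ i, 0 < μ (Qs i))
    (hQdiam : ∀ i, EMetric.diam (Qs i) ≤ ENNReal.ofReal (κ ^ gQ i))
    (hQgrow : ∀ i, ∀ y ∈ Qs i, ∀ r : ℝ, κ ^ gQ i ≤ r → μ (ball y r) ≤ ENNReal.ofReal (A * r ^ m))
    (R : Set X) (n₀ : ℤ) (hRne : R.Nonempty)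
    (hRdiam : EMetric.diam R ≤ ENNReal.ofReal (κ ^ n₀)) :
    (∑' i, if n₀ ≤ gQ i then
        ENNReal.ofReal ((κ ^ gQ i) ^ (τ / 2) * (κ ^ n₀) ^ (τ / 2) /
          (κ ^ gQ i + κ ^ n₀ + setDist (Qs i) R) ^ (m + τ)) * μ (Qs i)
      else 0) ≤
      ENNReal.ofReal (2 ^ (m + τ) * (A * 2 ^ (4 * m + τ) / (1 - 2 ^ (-τ))) / (1 - κ ^ (τ / 2))) := by
  classical
  obtain ⟨y, hy⟩ := hRne
  have h2τlt : (2:ℝ) ^ (-τ) < 1 := Real.rpow_lt_one_of_one_lt_of_neg one_lt_two (by linarith)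
  have h2τ0 : (0:ℝ) < 2 ^ (-τ) := Real.rpow_pos_of_pos two_pos _
  have h2mτ0 : (0:ℝ) < 2 ^ (m + τ) := Real.rpow_pos_of_pos two_pos _
  set CA : ℝ := A * 2 ^ (4 * m + τ) / (1 - 2 ^ (-τ)) with hCA
  have hCApos : 0 < CA := by
    rw [hCA]; exact div_pos (by positivity) (by linarith)
  have hκτ1 : κ ^ (τ / 2) < 1 := Real.rpow_lt_one hκ0.le hκ1 (by linarith)
  have hκτ0 : (0:ℝ) < κ ^ (τ / 2) := Real.rpow_pos_of_pos hκ0 _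
  set q : ℝ≥0∞ := ENNReal.ofReal (κ ^ (τ / 2)) with hq
  set F : ιQ → ℝ≥0∞ := fun i => if n₀ ≤ gQ i then
      ENNReal.ofReal ((κ ^ gQ i) ^ (τ / 2) * (κ ^ n₀) ^ (τ / 2) /
        (κ ^ gQ i + κ ^ n₀ + setDist (Qs i) R) ^ (m + τ)) * μ (Qs i)
    else 0 with hF
  have hQne : ∀ i, (Qs i).Nonempty := fun i => nonempty_of_measure_ne_zero (hQpos i).ne'
  have key : ∀ n : ℤ, (∑' i : {i // gQ i = n}, F i.1) ≤
      (if n₀ ≤ n then ENNReal.ofReal (2 ^ (m + τ) * CA) * q ^ (n - n₀).toNat else 0) := by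
    intro n
    by_cases hn : n₀ ≤ n
    swap
    · rw [if_neg hn]
      have hz : ∀ i : {i // gQ i = n}, F i.1 = 0 := by
        rintro ⟨i, hi⟩
        simp only [hF, hi, if_neg hn]
      rw [tsum_congr hz, tsum_zero]
    rw [if_pos hn]
    have hκn : (κ:ℝ) ^ n ≤ κ ^ n₀ := zpow_le_zpow_right_of_le_one₀ hκ0 hκ1.le hn
    have hterm : ∀ i : {i // gQ i = n}, F i.1 ≤
        ENNReal.ofReal (2 ^ (m + τ) * ((κ ^ n) ^ (τ / 2) * (κ ^ n₀) ^ (τ / 2))) *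
          (μ (Qs i.1) * ENNReal.ofReal ((κ ^ n₀ + setDist {y} (Qs i.1)) ^ (-(m + τ)))) := by
      rintro ⟨i, hi⟩
      simp only [hF, hi, if_pos hn]
      have hd0 : 0 ≤ setDist {y} (Qs i) := setDist_nonneg _ _
      have hdR : setDist {y} (Qs i) ≤ κ ^ n₀ + setDist (Qs i) R := by
        have h1 := setDist_singleton_le (hQne i) hy (le_of_lt (zpow_pos hκ0 n₀)) hRdiam
        rwa [setDist_comm R (Qs i)] at h1
      have hbase : (0:ℝ) < κ ^ n₀ + setDist {y} (Qs i) :=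
        add_pos_of_pos_of_nonneg (zpow_pos hκ0 n₀) hd0
      have hDnn : (0:ℝ) ≤ κ ^ n + κ ^ n₀ + setDist (Qs i) R := by
        have := setDist_nonneg (Qs i) R
        have h1 := zpow_pos hκ0 n (G₀ := ℝ)
        have h2 := zpow_pos hκ0 n₀ (G₀ := ℝ)
        linarith
      have hDge : κ ^ n₀ + setDist {y} (Qs i) ≤ 2 * (κ ^ n + κ ^ n₀ + setDist (Qs i) R) := by
        have h1 := zpow_pos hκ0 n (G₀ := ℝ)
        have h2 := setDist_nonneg (Qs i) R
        linarith
      have hs12 : (0:ℝ) ≤ (κ ^ n) ^ (τ / 2) * (κ ^ n₀) ^ (τ / 2) := by positivity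
      have hrpow : ((κ ^ n₀ + setDist {y} (Qs i)) ^ (m + τ) : ℝ) ≤
          2 ^ (m + τ) * ((κ ^ n + κ ^ n₀ + setDist (Qs i) R) ^ (m + τ)) := by
        have h1 : ((κ ^ n₀ + setDist {y} (Qs i)) ^ (m + τ) : ℝ) ≤
            (2 * (κ ^ n + κ ^ n₀ + setDist (Qs i) R)) ^ (m + τ) :=
          Real.rpow_le_rpow hbase.le hDge (by linarith)
        rwa [Real.mul_rpow (by norm_num) hDnn] at h1
      have hinv : (((κ ^ n + κ ^ n₀ + setDist (Qs i) R) ^ (m + τ) : ℝ))⁻¹ ≤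
          2 ^ (m + τ) * (((κ ^ n₀ + setDist {y} (Qs i)) ^ (m + τ) : ℝ))⁻¹ :=
        inv_le_mul_inv (Real.rpow_pos_of_pos hbase _) h2mτ0 hrpow
      have hreal : (κ ^ n) ^ (τ / 2) * (κ ^ n₀) ^ (τ / 2) /
            (κ ^ n + κ ^ n₀ + setDist (Qs i) R) ^ (m + τ) ≤
          2 ^ (m + τ) * ((κ ^ n) ^ (τ / 2) * (κ ^ n₀) ^ (τ / 2)) *
            (κ ^ n₀ + setDist {y} (Qs i)) ^ (-(m + τ)) := by
        rw [Real.rpow_neg hbase.le]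
        calc (κ ^ n) ^ (τ / 2) * (κ ^ n₀) ^ (τ / 2) /
              (κ ^ n + κ ^ n₀ + setDist (Qs i) R) ^ (m + τ)
            = (κ ^ n) ^ (τ / 2) * (κ ^ n₀) ^ (τ / 2) *
              ((κ ^ n + κ ^ n₀ + setDist (Qs i) R) ^ (m + τ))⁻¹ := div_eq_mul_inv _ _
          _ ≤ (κ ^ n) ^ (τ / 2) * (κ ^ n₀) ^ (τ / 2) *
              (2 ^ (m + τ) * (((κ ^ n₀ + setDist {y} (Qs i)) ^ (m + τ) : ℝ))⁻¹) :=
            mul_le_mul_of_nonneg_left hinv hs12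
          _ = 2 ^ (m + τ) * ((κ ^ n) ^ (τ / 2) * (κ ^ n₀) ^ (τ / 2)) *
              (((κ ^ n₀ + setDist {y} (Qs i)) ^ (m + τ) : ℝ))⁻¹ := by ring
      calc ENNReal.ofReal ((κ ^ n) ^ (τ / 2) * (κ ^ n₀) ^ (τ / 2) /
              (κ ^ n + κ ^ n₀ + setDist (Qs i) R) ^ (m + τ)) * μ (Qs i)
          ≤ ENNReal.ofReal (2 ^ (m + τ) * ((κ ^ n) ^ (τ / 2) * (κ ^ n₀) ^ (τ / 2)) *
              (κ ^ n₀ + setDist {y} (Qs i)) ^ (-(m + τ))) * μ (Qs i) :=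
            mul_le_mul' (ENNReal.ofReal_le_ofReal hreal) le_rfl
        _ = ENNReal.ofReal (2 ^ (m + τ) * ((κ ^ n) ^ (τ / 2) * (κ ^ n₀) ^ (τ / 2))) *
              ENNReal.ofReal ((κ ^ n₀ + setDist {y} (Qs i)) ^ (-(m + τ))) * μ (Qs i) := by
            rw [ENNReal.ofReal_mul (by positivity)]
        _ = ENNReal.ofReal (2 ^ (m + τ) * ((κ ^ n) ^ (τ / 2) * (κ ^ n₀) ^ (τ / 2))) *
              (μ (Qs i) * ENNReal.ofReal ((κ ^ n₀ + setDist {y} (Qs i)) ^ (-(m + τ)))) := by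
            rw [mul_assoc]
            congr 1
            rw [mul_comm]
    have hpack : (∑' i : {i // gQ i = n},
        μ (Qs i.1) * ENNReal.ofReal ((κ ^ n₀ + setDist {y} (Qs i.1)) ^ (-(m + τ)))) ≤
        ENNReal.ofReal (A * 2 ^ (4 * m + τ) / (1 - 2 ^ (-τ)) * (κ ^ n₀) ^ (-τ)) := by
      refine packing_lemma μ hm hτ hA (fun i : {i // gQ i = n} => Qs i.1)
        (fun i => hQmeas i.1) ?_ (fun i => hQne i.1) (zpow_pos hκ0 n₀) ?_ ?_ y
      · rintro i i' hii'
        exact hQdisj i.1 i'.1 (Subtype.coe_injective.ne_iff.2 hii') (by rw [i.2, i'.2])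
      · rintro ⟨i, hi⟩
        have hh := hQdiam i
        refine le_trans hh (ENNReal.ofReal_le_ofReal ?_)
        rw [hi]
        exact hκn
      · rintro ⟨i, hi⟩ z hz r hr
        refine hQgrow i z hz r ?_
        rw [hi]
        linarith
    calc (∑' i : {i // gQ i = n}, F i.1)
        ≤ ∑' i : {i // gQ i = n},
            ENNReal.ofReal (2 ^ (m + τ) * ((κ ^ n) ^ (τ / 2) * (κ ^ n₀) ^ (τ / 2))) *
            (μ (Qs i.1) * ENNReal.ofReal ((κ ^ n₀ + setDist {y} (Qs i.1)) ^ (-(m + τ)))) :=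
          ENNReal.tsum_le_tsum hterm
      _ = ENNReal.ofReal (2 ^ (m + τ) * ((κ ^ n) ^ (τ / 2) * (κ ^ n₀) ^ (τ / 2))) *
            ∑' i : {i // gQ i = n},
              μ (Qs i.1) * ENNReal.ofReal ((κ ^ n₀ + setDist {y} (Qs i.1)) ^ (-(m + τ))) :=
          ENNReal.tsum_mul_left
      _ ≤ ENNReal.ofReal (2 ^ (m + τ) * ((κ ^ n) ^ (τ / 2) * (κ ^ n₀) ^ (τ / 2))) *
            ENNReal.ofReal (A * 2 ^ (4 * m + τ) / (1 - 2 ^ (-τ)) * (κ ^ n₀) ^ (-τ)) :=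
          mul_le_mul' le_rfl hpack
      _ = ENNReal.ofReal (2 ^ (m + τ) * CA) * q ^ (n - n₀).toNat := by
          rw [← ENNReal.ofReal_mul (by positivity)]
          rw [show 2 ^ (m + τ) * ((κ ^ n) ^ (τ / 2) * (κ ^ n₀) ^ (τ / 2)) *
              (A * 2 ^ (4 * m + τ) / (1 - 2 ^ (-τ)) * (κ ^ n₀) ^ (-τ)) =
              2 ^ (m + τ) * ((κ ^ n) ^ (τ / 2) * (κ ^ n₀) ^ (τ / 2) *
                (CA * (κ ^ n₀) ^ (-τ))) from by rw [hCA]; ring]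
          rw [kappa_calc hκ0 hτ hn CA]
          rw [show (2:ℝ) ^ (m + τ) * (CA * (κ ^ (τ / 2)) ^ (n - n₀).toNat) =
              (2 ^ (m + τ) * CA) * (κ ^ (τ / 2)) ^ (n - n₀).toNat from by ring]
          rw [ENNReal.ofReal_mul (by positivity), hq, ENNReal.ofReal_pow hκτ0.le]
  have hdecomp : (∑' i, F i) = ∑' n : ℤ, ∑' i : {i // gQ i = n}, F i.1 := by
    calc (∑' i, F i)
        = ∑' σ : (Σ n : ℤ, {i // gQ i = n}), F ((Equiv.sigmaFiberEquiv gQ) σ) :=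
          ((Equiv.sigmaFiberEquiv gQ).tsum_eq F).symm
      _ = ∑' (n : ℤ), ∑' (i : {i // gQ i = n}), F ((Equiv.sigmaFiberEquiv gQ) ⟨n, i⟩) :=
          ENNReal.tsum_sigma' _
      _ = ∑' n : ℤ, ∑' i : {i // gQ i = n}, F i.1 :=
          tsum_congr fun n => tsum_congr fun i => rfl
  rw [hdecomp]
  have hgeo : (∑' n : ℤ, ∑' i : {i // gQ i = n}, F i.1) ≤
      ENNReal.ofReal (2 ^ (m + τ) * CA) * (1 - q)⁻¹ :=
    tsum_int_le_geom_up key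
  refine le_trans hgeo ?_
  have hq1 : (1:ℝ≥0∞) - q = ENNReal.ofReal (1 - κ ^ (τ / 2)) := by
    rw [hq, ENNReal.ofReal_sub 1 hκτ0.le, ENNReal.ofReal_one]
  rw [hq1, ← ENNReal.ofReal_inv_of_pos (by linarith),
    ← ENNReal.ofReal_mul (by positivity)]
  apply ENNReal.ofReal_le_ofReal
  rw [div_eq_mul_inv (2 ^ (m + τ) * CA)]

/-- The matrix `T_{Q,R} = s(Q)^{τ/2} s(R)^{τ/2} D(Q,R)^{−(m+τ)} √(μ(Q)μ(R))` indexed by the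
transit cubes of two dyadic lattices (cubes of generation `i` being pairwise disjoint, of
diameter at most `κ^i`, and all non-Ahlfors balls centered in them of radius at most `κ^i`,
i.e. `μ(B(x,r)) ≤ A r^m` for `r ≥ κ^i`) is bounded on `ℓ²`, restricted to pairs with
`s(Q) ≤ s(R)`:  `Σ T_{Q,R} a_Q b_R ≤ C (Σ a_Q²)^{1/2} (Σ b_R²)^{1/2}` where
`C = C(A,m,τ,κ)`. -/
theorem long_range_matrix_bound (m τ A κ : ℝ)
    (hm : 0 < m) (hτ : 0 < τ) (hA : 0 < A) (hκ0 : 0 < κ) (hκ1 : κ < 1) :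
    ∃ C : ℝ, 0 < C ∧
      ∀ (X : Type) [MetricSpace X] [MeasurableSpace X] [BorelSpace X] (μ : Measure X)
        (ιQ ιR : Type) [Countable ιQ] [Countable ιR]
        (Qs : ιQ → Set X) (gQ : ιQ → ℤ) (Rs : ιR → Set X) (gR : ιR → ℤ)
        (a : ιQ → ℝ) (b : ιR → ℝ),
        (∀ i, MeasurableSet (Qs i)) →
        (∀ i i', i ≠ i' → gQ i = gQ i' → Disjoint (Qs i) (Qs i')) →
        (∀ i, 0 < μ (Qs i)) → (∀ i, μ (Qs i) < ⊤) →
        (∀ i, EMetric.diam (Qs i) ≤ ENNReal.ofReal (κ ^ gQ i)) →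
        (∀ i, ∀ x ∈ Qs i, ∀ r : ℝ, κ ^ gQ i ≤ r →
          μ (ball x r) ≤ ENNReal.ofReal (A * r ^ m)) →
        (∀ j, MeasurableSet (Rs j)) →
        (∀ j j', j ≠ j' → gR j = gR j' → Disjoint (Rs j) (Rs j')) →
        (∀ j, 0 < μ (Rs j)) → (∀ j, μ (Rs j) < ⊤) →
        (∀ j, EMetric.diam (Rs j) ≤ ENNReal.ofReal (κ ^ gR j)) →
        (∀ j, ∀ y ∈ Rs j, ∀ r : ℝ, κ ^ gR j ≤ r →
          μ (ball y r) ≤ ENNReal.ofReal (A * r ^ m)) →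
        (∀ i, 0 ≤ a i) → (∀ j, 0 ≤ b j) →
        (∑' p : ιQ × ιR,
          if gR p.2 ≤ gQ p.1 then
            ENNReal.ofReal
              ((κ ^ gQ p.1) ^ (τ / 2) * (κ ^ gR p.2) ^ (τ / 2) /
                  (κ ^ gQ p.1 + κ ^ gR p.2 + setDist (Qs p.1) (Rs p.2)) ^ (m + τ) *
                Real.sqrt ((μ (Qs p.1)).toReal * (μ (Rs p.2)).toReal) * a p.1 * b p.2)
          else 0) ≤
          ENNReal.ofReal C * (∑' i, ENNReal.ofReal (a i ^ 2)) ^ ((1 : ℝ) / 2) *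
            (∑' j, ENNReal.ofReal (b j ^ 2)) ^ ((1 : ℝ) / 2) := by
  classical
  have h2τlt : (2:ℝ) ^ (-τ) < 1 := Real.rpow_lt_one_of_one_lt_of_neg one_lt_two (by linarith)
  have hκτ1 : κ ^ (τ / 2) < 1 := Real.rpow_lt_one hκ0.le hκ1 (by linarith)
  refine ⟨2 ^ (m + τ) * (A * 2 ^ (4 * m + τ) / (1 - 2 ^ (-τ))) / (1 - κ ^ (τ / 2)), ?_, ?_⟩
  · apply div_pos
    · exact mul_pos (Real.rpow_pos_of_pos two_pos _)
        (div_pos (by positivity) (by linarith))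
    · linarith
  set C : ℝ := 2 ^ (m + τ) * (A * 2 ^ (4 * m + τ) / (1 - 2 ^ (-τ))) / (1 - κ ^ (τ / 2)) with hC
  have hCpos : 0 < C := by
    rw [hC]
    apply div_pos
    · exact mul_pos (Real.rpow_pos_of_pos two_pos _)
        (div_pos (by positivity) (by linarith))
    · linarith
  intro X _ _ _ μ ιQ ιR _ _ Qs gQ Rs gR a b hQmeas hQdisj hQpos hQfin hQdiam hQgrow
    hRmeas hRdisj hRpos hRfin hRdiam hRgrow ha hb
  have hQne : ∀ i, (Qs i).Nonempty := fun i => nonempty_of_measure_ne_zero (hQpos i).ne'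
  have hRne : ∀ j, (Rs j).Nonempty := fun j => nonempty_of_measure_ne_zero (hRpos j).ne'
  set kb : ιQ × ιR → ℝ := fun p =>
    (κ ^ gQ p.1) ^ (τ / 2) * (κ ^ gR p.2) ^ (τ / 2) /
      (κ ^ gQ p.1 + κ ^ gR p.2 + setDist (Qs p.1) (Rs p.2)) ^ (m + τ) with hkb
  have hkb0 : ∀ p, 0 ≤ kb p := by
    intro p
    rw [hkb]
    have h1 : (0:ℝ) ≤ (κ ^ gQ p.1 + κ ^ gR p.2 + setDist (Qs p.1) (Rs p.2)) ^ (m + τ) := by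
      apply Real.rpow_nonneg
      have := setDist_nonneg (Qs p.1) (Rs p.2)
      have h2 := zpow_pos hκ0 (gQ p.1) (G₀ := ℝ)
      have h3 := zpow_pos hκ0 (gR p.2) (G₀ := ℝ)
      linarith
    positivity
  set g : ιQ × ιR → ℝ≥0∞ := fun p => if gR p.2 ≤ gQ p.1 then
      ENNReal.ofReal (Real.sqrt (kb p * (μ (Rs p.2)).toReal) * a p.1) else 0 with hg
  set h : ιQ × ιR → ℝ≥0∞ := fun p => if gR p.2 ≤ gQ p.1 then
      ENNReal.ofReal (Real.sqrt (kb p * (μ (Qs p.1)).toReal) * b p.2) else 0 with hh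
  -- splitting of each term
  have hsplit : ∀ p : ιQ × ιR,
      (if gR p.2 ≤ gQ p.1 then
        ENNReal.ofReal (kb p * Real.sqrt ((μ (Qs p.1)).toReal * (μ (Rs p.2)).toReal) *
          a p.1 * b p.2) else 0) = g p * h p := by
    intro p
    by_cases hc : gR p.2 ≤ gQ p.1
    · rw [hg, hh]
      simp only [if_pos hc]
      rw [← ENNReal.ofReal_mul (mul_nonneg (Real.sqrt_nonneg _) (ha p.1))]
      congr 1
      have hx : (0:ℝ) ≤ (μ (Qs p.1)).toReal := ENNReal.toReal_nonneg
      have hy : (0:ℝ) ≤ (μ (Rs p.2)).toReal := ENNReal.toReal_nonneg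
      have hss : Real.sqrt (kb p * (μ (Rs p.2)).toReal) *
          Real.sqrt (kb p * (μ (Qs p.1)).toReal) =
          kb p * Real.sqrt ((μ (Qs p.1)).toReal * (μ (Rs p.2)).toReal) := by
        rw [← Real.sqrt_mul (mul_nonneg (hkb0 p) hy)]
        rw [show kb p * (μ (Rs p.2)).toReal * (kb p * (μ (Qs p.1)).toReal) =
            kb p ^ 2 * ((μ (Qs p.1)).toReal * (μ (Rs p.2)).toReal) from by ring]
        rw [Real.sqrt_mul (sq_nonneg _), Real.sqrt_sq (hkb0 p)]
      symm
      calc Real.sqrt (kb p * (μ (Rs p.2)).toReal) * a p.1 *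
            (Real.sqrt (kb p * (μ (Qs p.1)).toReal) * b p.2)
          = Real.sqrt (kb p * (μ (Rs p.2)).toReal) *
              Real.sqrt (kb p * (μ (Qs p.1)).toReal) * a p.1 * b p.2 := by ring
        _ = kb p * Real.sqrt ((μ (Qs p.1)).toReal * (μ (Rs p.2)).toReal) * a p.1 * b p.2 := by
            rw [hss]
    · rw [hg, hh]
      simp only [if_neg hc, zero_mul]
  -- squares
  have hgsq : ∀ p : ιQ × ιR, g p ^ (2:ℝ) =
      (if gR p.2 ≤ gQ p.1 then ENNReal.ofReal (kb p) * μ (Rs p.2) else 0) *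
        ENNReal.ofReal (a p.1 ^ 2) := by
    intro p
    by_cases hc : gR p.2 ≤ gQ p.1
    · rw [hg]
      simp only [if_pos hc]
      have hs0 : (0:ℝ) ≤ Real.sqrt (kb p * (μ (Rs p.2)).toReal) * a p.1 :=
        mul_nonneg (Real.sqrt_nonneg _) (ha p.1)
      rw [ENNReal.ofReal_rpow_of_nonneg hs0 (by norm_num)]
      rw [show ((2:ℝ)) = ((2:ℕ):ℝ) from by norm_num, Real.rpow_natCast]
      rw [mul_pow, Real.sq_sqrt (mul_nonneg (hkb0 p) ENNReal.toReal_nonneg)]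
      rw [show kb p * (μ (Rs p.2)).toReal * a p.1 ^ 2 =
          (kb p * (μ (Rs p.2)).toReal) * a p.1 ^ 2 from rfl]
      rw [ENNReal.ofReal_mul (mul_nonneg (hkb0 p) ENNReal.toReal_nonneg)]
      rw [ENNReal.ofReal_mul (hkb0 p), ENNReal.ofReal_toReal (hRfin p.2).ne]
    · rw [hg]
      simp only [if_neg hc]
      rw [ENNReal.zero_rpow_of_pos (by norm_num), zero_mul]
  have hhsq : ∀ p : ιQ × ιR, h p ^ (2:ℝ) =
      (if gR p.2 ≤ gQ p.1 then ENNReal.ofReal (kb p) * μ (Qs p.1) else 0) *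
        ENNReal.ofReal (b p.2 ^ 2) := by
    intro p
    by_cases hc : gR p.2 ≤ gQ p.1
    · rw [hh]
      simp only [if_pos hc]
      have hs0 : (0:ℝ) ≤ Real.sqrt (kb p * (μ (Qs p.1)).toReal) * b p.2 :=
        mul_nonneg (Real.sqrt_nonneg _) (hb p.2)
      rw [ENNReal.ofReal_rpow_of_nonneg hs0 (by norm_num)]
      rw [show ((2:ℝ)) = ((2:ℕ):ℝ) from by norm_num, Real.rpow_natCast]
      rw [mul_pow, Real.sq_sqrt (mul_nonneg (hkb0 p) ENNReal.toReal_nonneg)]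
      rw [ENNReal.ofReal_mul (mul_nonneg (hkb0 p) ENNReal.toReal_nonneg)]
      rw [ENNReal.ofReal_mul (hkb0 p), ENNReal.ofReal_toReal (hQfin p.1).ne]
    · rw [hh]
      simp only [if_neg hc]
      rw [ENNReal.zero_rpow_of_pos (by norm_num), zero_mul]
  -- row sums
  have hrow : ∀ i : ιQ, (∑' j : ιR, (if gR j ≤ gQ i then
      ENNReal.ofReal (kb (i, j)) * μ (Rs j) else 0)) ≤ ENNReal.ofReal C := by
    intro i
    rw [hC]
    exact row_bound μ hm hτ hA hκ0 hκ1 Rs gR hRmeas hRdisj hRpos hRdiam hRgrow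
      (Qs i) (gQ i) (hQne i) (hQdiam i)
  have hcol : ∀ j : ιR, (∑' i : ιQ, (if gR j ≤ gQ i then
      ENNReal.ofReal (kb (i, j)) * μ (Qs i) else 0)) ≤ ENNReal.ofReal C := by
    intro j
    rw [hC]
    exact col_bound μ hm hτ hA hκ0 hκ1 Qs gQ hQmeas hQdisj hQpos hQdiam hQgrow
      (Rs j) (gR j) (hRne j) (hRdiam j)
  set Sa : ℝ≥0∞ := ∑' i, ENNReal.ofReal (a i ^ 2) with hSa
  set Sb : ℝ≥0∞ := ∑' j, ENNReal.ofReal (b j ^ 2) with hSb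
  have hg2 : (∑' p : ιQ × ιR, g p ^ (2:ℝ)) ≤ ENNReal.ofReal C * Sa := by
    calc (∑' p : ιQ × ιR, g p ^ (2:ℝ))
        = ∑' p : ιQ × ιR, (if gR p.2 ≤ gQ p.1 then
            ENNReal.ofReal (kb p) * μ (Rs p.2) else 0) * ENNReal.ofReal (a p.1 ^ 2) :=
          tsum_congr hgsq
      _ = ∑' i : ιQ, ∑' j : ιR, (if gR j ≤ gQ i then
            ENNReal.ofReal (kb (i, j)) * μ (Rs j) else 0) * ENNReal.ofReal (a i ^ 2) :=
          ENNReal.tsum_prod'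
      _ = ∑' i : ιQ, (∑' j : ιR, (if gR j ≤ gQ i then
            ENNReal.ofReal (kb (i, j)) * μ (Rs j) else 0)) * ENNReal.ofReal (a i ^ 2) :=
          tsum_congr fun i => ENNReal.tsum_mul_right
      _ ≤ ∑' i : ιQ, ENNReal.ofReal C * ENNReal.ofReal (a i ^ 2) :=
          ENNReal.tsum_le_tsum fun i => mul_le_mul' (hrow i) le_rfl
      _ = ENNReal.ofReal C * Sa := by rw [ENNReal.tsum_mul_left, hSa]
  have hh2 : (∑' p : ιQ × ιR, h p ^ (2:ℝ)) ≤ ENNReal.ofReal C * Sb := by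
    calc (∑' p : ιQ × ιR, h p ^ (2:ℝ))
        = ∑' p : ιQ × ιR, (if gR p.2 ≤ gQ p.1 then
            ENNReal.ofReal (kb p) * μ (Qs p.1) else 0) * ENNReal.ofReal (b p.2 ^ 2) :=
          tsum_congr hhsq
      _ = ∑' i : ιQ, ∑' j : ιR, (if gR j ≤ gQ i then
            ENNReal.ofReal (kb (i, j)) * μ (Qs i) else 0) * ENNReal.ofReal (b j ^ 2) :=
          ENNReal.tsum_prod'
      _ = ∑' j : ιR, ∑' i : ιQ, (if gR j ≤ gQ i then
            ENNReal.ofReal (kb (i, j)) * μ (Qs i) else 0) * ENNReal.ofReal (b j ^ 2) :=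
          ENNReal.tsum_comm
      _ = ∑' j : ιR, (∑' i : ιQ, (if gR j ≤ gQ i then
            ENNReal.ofReal (kb (i, j)) * μ (Qs i) else 0)) * ENNReal.ofReal (b j ^ 2) :=
          tsum_congr fun j => ENNReal.tsum_mul_right
      _ ≤ ∑' j : ιR, ENNReal.ofReal C * ENNReal.ofReal (b j ^ 2) :=
          ENNReal.tsum_le_tsum fun j => mul_le_mul' (hcol j) le_rfl
      _ = ENNReal.ofReal C * Sb := by rw [ENNReal.tsum_mul_left, hSb]
  have hCoR : (ENNReal.ofReal C) ^ ((1:ℝ)/2) * (ENNReal.ofReal C) ^ ((1:ℝ)/2) =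
      ENNReal.ofReal C := by
    rw [← ENNReal.rpow_add _ _ (ENNReal.ofReal_pos.2 hCpos).ne' ENNReal.ofReal_ne_top]
    norm_num
  calc (∑' p : ιQ × ιR,
      if gR p.2 ≤ gQ p.1 then
        ENNReal.ofReal
          ((κ ^ gQ p.1) ^ (τ / 2) * (κ ^ gR p.2) ^ (τ / 2) /
              (κ ^ gQ p.1 + κ ^ gR p.2 + setDist (Qs p.1) (Rs p.2)) ^ (m + τ) *
            Real.sqrt ((μ (Qs p.1)).toReal * (μ (Rs p.2)).toReal) * a p.1 * b p.2)
      else 0)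
      = ∑' p : ιQ × ιR, g p * h p := tsum_congr hsplit
    _ ≤ (∑' p : ιQ × ιR, g p ^ (2:ℝ)) ^ ((1:ℝ)/2) *
          (∑' p : ιQ × ιR, h p ^ (2:ℝ)) ^ ((1:ℝ)/2) := tsum_holder g h
    _ ≤ (ENNReal.ofReal C * Sa) ^ ((1:ℝ)/2) * (ENNReal.ofReal C * Sb) ^ ((1:ℝ)/2) :=
        mul_le_mul' (ENNReal.rpow_le_rpow hg2 (by norm_num))
          (ENNReal.rpow_le_rpow hh2 (by norm_num))
    _ = ENNReal.ofReal C * Sa ^ ((1:ℝ)/2) * Sb ^ ((1:ℝ)/2) := by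
        rw [ENNReal.mul_rpow_of_nonneg _ _ (by norm_num : (0:ℝ) ≤ (1:ℝ)/2),
            ENNReal.mul_rpow_of_nonneg _ _ (by norm_num : (0:ℝ) ≤ (1:ℝ)/2)]
        calc (ENNReal.ofReal C) ^ ((1:ℝ)/2) * Sa ^ ((1:ℝ)/2) *
              ((ENNReal.ofReal C) ^ ((1:ℝ)/2) * Sb ^ ((1:ℝ)/2))
            = (ENNReal.ofReal C) ^ ((1:ℝ)/2) * (ENNReal.ofReal C) ^ ((1:ℝ)/2) *
              Sa ^ ((1:ℝ)/2) * Sb ^ ((1:ℝ)/2) := by ring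
          _ = ENNReal.ofReal C * Sa ^ ((1:ℝ)/2) * Sb ^ ((1:ℝ)/2) := by rw [hCoR]
end

section
/- Let X be a set equipped with a Borel measure μ (with respect to some measurable structure), κ ∈ (0,1), and τ > 0. Let ℛ be a countable index set and for each R ∈ ℛ let R₁ ⊆ X be a measurable set with 0 < μ(R₁) < ∞. For each R ∈ ℛ and each integer k ≥ 1, let 𝒬(R,k) be a countable family of pairwise disjoint measurable subsets of R₁, and assume each set Q occurs in at most one family 𝒬(R,k). For Q ∈ 𝒬(R,k) define T_{Q,R} := κ^{kτ/2}·√(μ(Q)/μ(R₁)). Then for all families of nonnegative numbers (a_Q) and (b_R): Σ_{R∈ℛ} Σ_{k≥1} Σ_{Q∈𝒬(R,k)} T_{Q,R} a_Q b_R ≤ (1 − κ^{τ/2})^{−1} · (Σ_Q a_Q²)^{1/2} (Σ_R b_R²)^{1/2}. -/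
open MeasureTheory
open scoped ENNReal

lemma tsum_cs {ι : Type*} (u v : ι → ℝ≥0∞) :
    ∑' i, u i * v i ≤ (∑' i, u i ^ 2) ^ ((1:ℝ)/2) * (∑' i, v i ^ 2) ^ ((1:ℝ)/2) := by
  letI : MeasurableSpace ι := ⊤
  have hm : ∀ f : ι → ℝ≥0∞, Measurable f := fun f s _ => trivial
  have hpq : Real.HolderConjugate 2 2 := Real.HolderConjugate.two_two
  have h := ENNReal.lintegral_mul_le_Lp_mul_Lq (Measure.count) hpq
    (hm u).aemeasurable (hm v).aemeasurable
  simp only [Pi.mul_apply] at h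
  rw [lintegral_count' (hm _), lintegral_count' (hm _), lintegral_count' (hm _)] at h
  have e2 : ∀ x : ℝ≥0∞, x ^ (2:ℝ) = x ^ 2 := fun x => by
    rw [← ENNReal.rpow_natCast x 2]; norm_num
  simp only [e2, one_div] at h ⊢
  exact h


/-- The block matrix `T_{Q,R} = κ^{kτ/2}·√(μ(Q)/μ(R₁))`, where for each `R` and each `k ≥ 1`
the cubes `Q ∈ 𝒬(R,k)` are pairwise disjoint subsets of the child `R₁` of `R` (each cube `Q`
belonging to exactly one family, which is encoded by the index maps `r`, `kk`), generates a
bounded operator on `ℓ²` with norm at most `(1 − κ^{τ/2})⁻¹`. -/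
theorem short_range_matrix_bound
    {X : Type*} [MeasurableSpace X] (μ : Measure X)
    (κ τ : ℝ) (hκ0 : 0 < κ) (hκ1 : κ < 1) (hτ : 0 < τ)
    {ιR ιQ : Type*} [Countable ιR] [Countable ιQ]
    (R₁ : ιR → Set X) (hR₁meas : ∀ j, MeasurableSet (R₁ j))
    (hR₁pos : ∀ j, 0 < μ (R₁ j)) (hR₁fin : ∀ j, μ (R₁ j) < ⊤)
    (Qs : ιQ → Set X) (r : ιQ → ιR) (kk : ιQ → ℕ) (hkk : ∀ i, 1 ≤ kk i)
    (hQmeas : ∀ i, MeasurableSet (Qs i)) (hQsub : ∀ i, Qs i ⊆ R₁ (r i))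
    (hdisj : ∀ i i', i ≠ i' → r i = r i' → kk i = kk i' → Disjoint (Qs i) (Qs i'))
    (a : ιQ → ℝ) (b : ιR → ℝ) (ha : ∀ i, 0 ≤ a i) (hb : ∀ j, 0 ≤ b j) :
    (∑' i : ιQ, ENNReal.ofReal
        (κ ^ ((kk i : ℝ) * τ / 2) *
          Real.sqrt ((μ (Qs i)).toReal / (μ (R₁ (r i))).toReal) * a i * b (r i))) ≤
      ENNReal.ofReal ((1 - κ ^ (τ / 2))⁻¹) *
        (∑' i, ENNReal.ofReal (a i ^ 2)) ^ ((1 : ℝ) / 2) *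
        (∑' j, ENNReal.ofReal (b j ^ 2)) ^ ((1 : ℝ) / 2) := by
  set q : ℝ := κ ^ (τ / 2) with hq
  have hq0 : 0 < q := Real.rpow_pos_of_pos hκ0 _
  have hq1 : q < 1 := Real.rpow_lt_one hκ0.le hκ1 (by positivity)
  set Q : ℝ≥0∞ := ENNReal.ofReal q with hQ
  have hQ0 : Q ≠ 0 := by
    simp [hQ, ENNReal.ofReal_eq_zero, not_le, hq0]
  have hQtop : Q ≠ ⊤ := ENNReal.ofReal_ne_top
  have hQ1 : Q ≤ 1 := by
    rw [hQ, ← ENNReal.ofReal_one]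
    exact ENNReal.ofReal_le_ofReal hq1.le
  -- notation
  set A : ιQ → ℝ≥0∞ := fun i => ENNReal.ofReal (a i) with hA
  set B : ιR → ℝ≥0∞ := fun j => ENNReal.ofReal (b j) with hB
  set s : ιQ → ℝ≥0∞ :=
    fun i => ENNReal.ofReal (Real.sqrt ((μ (Qs i)).toReal / (μ (R₁ (r i))).toReal)) with hs
  -- power rewrite
  have hpow : ∀ k : ℕ, ENNReal.ofReal (κ ^ ((k : ℝ) * τ / 2)) = Q ^ k := by
    intro k
    rw [show (k : ℝ) * τ / 2 = τ / 2 * (k : ℝ) by ring, Real.rpow_mul hκ0.le,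
      Real.rpow_natCast, hQ, ENNReal.ofReal_pow hq0.le]
  have hterm : ∀ i, ENNReal.ofReal
      (κ ^ ((kk i : ℝ) * τ / 2) *
        Real.sqrt ((μ (Qs i)).toReal / (μ (R₁ (r i))).toReal) * a i * b (r i)) =
      Q ^ kk i * s i * A i * B (r i) := by
    intro i
    have h1 : (0:ℝ) ≤ κ ^ ((kk i : ℝ) * τ / 2) := Real.rpow_nonneg hκ0.le _
    have h2 := Real.sqrt_nonneg ((μ (Qs i)).toReal / (μ (R₁ (r i))).toReal)
    rw [ENNReal.ofReal_mul (mul_nonneg (mul_nonneg h1 h2) (ha i)),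
      ENNReal.ofReal_mul (mul_nonneg h1 h2), ENNReal.ofReal_mul h1, hpow]
  simp only [hterm]
  set p : ιQ → ιR × ℕ := fun i => (r i, kk i) with hp
  -- fiberwise decomposition
  rw [← ENNReal.tsum_fiberwise (fun i => Q ^ kk i * s i * A i * B (r i)) p]
  set G : ιR × ℕ → ℝ≥0∞ := fun x => ∑' i : p ⁻¹' {x}, A i ^ 2 with hG
  have fiber_r : ∀ x : ιR × ℕ, ∀ i : p ⁻¹' {x}, r (i : ιQ) = x.1 := by
    rintro x ⟨i, hi⟩
    exact congrArg Prod.fst (by simpa using hi)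
  have fiber_k : ∀ x : ιR × ℕ, ∀ i : p ⁻¹' {x}, kk (i : ιQ) = x.2 := by
    rintro x ⟨i, hi⟩
    exact congrArg Prod.snd (by simpa using hi)
  -- Step: bound each fiber sum
  have step1 : ∀ x : ιR × ℕ,
      (∑' i : p ⁻¹' {x}, Q ^ kk (i : ιQ) * s i * A i * B (r (i : ιQ))) ≤
        Q ^ x.2 * B x.1 * G x ^ ((1:ℝ)/2) := by
    intro x
    have e : (∑' i : p ⁻¹' {x}, Q ^ kk (i : ιQ) * s i * A i * B (r (i : ιQ))) =
        ∑' i : p ⁻¹' {x}, (Q ^ x.2 * B x.1) * (s i * A i) :=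
      tsum_congr fun i => by rw [fiber_r x i, fiber_k x i]; ring
    rw [e, ENNReal.tsum_mul_left]
    refine mul_le_mul_right ?_ (Q ^ x.2 * B x.1)
    calc (∑' i : p ⁻¹' {x}, s (i : ιQ) * A i)
        ≤ (∑' i : p ⁻¹' {x}, s (i : ιQ) ^ 2) ^ ((1:ℝ)/2) *
          (∑' i : p ⁻¹' {x}, A (i : ιQ) ^ 2) ^ ((1:ℝ)/2) := tsum_cs _ _
      _ ≤ 1 * G x ^ ((1:ℝ)/2) := by
          refine mul_le_mul_left ?_ _
          have hsum : (∑' i : p ⁻¹' {x}, s (i : ιQ) ^ 2) ≤ 1 := by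
            have hsq : ∀ i : p ⁻¹' {x}, s (i : ιQ) ^ 2 = μ (Qs i) / μ (R₁ x.1) := by
              intro i
              rw [hs]
              have h0 : 0 ≤ (μ (Qs (i:ιQ))).toReal / (μ (R₁ (r (i:ιQ)))).toReal := by positivity
              rw [sq, ← ENNReal.ofReal_mul (Real.sqrt_nonneg _), Real.mul_self_sqrt h0,
                fiber_r x i, ← ENNReal.toReal_div, ENNReal.ofReal_toReal]
              exact (ENNReal.div_lt_top (ne_top_of_le_ne_top (hR₁fin x.1).ne
                (measure_mono (fiber_r x i ▸ hQsub (i:ιQ)))) (hR₁pos x.1).ne').ne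
            simp only [hsq]
            simp only [div_eq_mul_inv]
            rw [ENNReal.tsum_mul_right]
            simp only [← div_eq_mul_inv]
            have hU : (∑' i : p ⁻¹' {x}, μ (Qs (i : ιQ))) ≤ μ (R₁ x.1) := by
              have hdis : Pairwise (Function.onFun Disjoint fun i : p ⁻¹' {x} => Qs (i : ιQ)) := by
                intro i i' hne
                exact hdisj _ _ (fun h => hne (Subtype.ext h))
                  ((fiber_r x i).trans (fiber_r x i').symm)
                  ((fiber_k x i).trans (fiber_k x i').symm)
              rw [← measure_iUnion hdis fun i => hQmeas _]
              refine measure_mono (Set.iUnion_subset fun i => ?_)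
              exact (fiber_r x i) ▸ hQsub (i : ιQ)
            calc (∑' i : p ⁻¹' {x}, μ (Qs (i : ιQ))) / μ (R₁ x.1)
                ≤ μ (R₁ x.1) / μ (R₁ x.1) := ENNReal.div_le_div_right hU _
              _ = 1 := ENNReal.div_self (hR₁pos x.1).ne' (hR₁fin x.1).ne
          calc (∑' i : p ⁻¹' {x}, s (i : ιQ) ^ 2) ^ ((1:ℝ)/2)
              ≤ (1 : ℝ≥0∞) ^ ((1:ℝ)/2) := ENNReal.rpow_le_rpow hsum (by norm_num)
            _ = 1 := ENNReal.one_rpow _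
      _ = G x ^ ((1:ℝ)/2) := one_mul _
  refine le_trans (ENNReal.tsum_le_tsum step1) ?_
  -- Cauchy–Schwarz over (j,k)
  set u : ιR × ℕ → ℝ≥0∞ := fun x => (Q ^ x.2) ^ ((1:ℝ)/2) * B x.1 with hu
  set v : ιR × ℕ → ℝ≥0∞ := fun x => (Q ^ x.2) ^ ((1:ℝ)/2) * G x ^ ((1:ℝ)/2) with hv
  have huv : ∀ x, Q ^ x.2 * B x.1 * G x ^ ((1:ℝ)/2) = u x * v x := by
    intro x
    have : (Q ^ x.2) ^ ((1:ℝ)/2) * (Q ^ x.2) ^ ((1:ℝ)/2) = Q ^ x.2 := by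
      rw [← ENNReal.rpow_add _ _ (pow_ne_zero _ hQ0) (ENNReal.pow_ne_top hQtop)]
      norm_num
    rw [hu, hv]; dsimp only
    rw [mul_mul_mul_comm, this]; ring
  simp only [huv]
  have hhalf : ∀ y : ℝ≥0∞, (y ^ ((1:ℝ)/2)) ^ 2 = y := by
    intro y
    rw [← ENNReal.rpow_natCast (y ^ ((1:ℝ)/2)) 2, ← ENNReal.rpow_mul]
    norm_num
  have hW : (∑' k : ℕ, Q ^ k) = (1 - Q)⁻¹ := ENNReal.tsum_geometric Q
  have hu2 : (∑' x, u x ^ 2) = (1 - Q)⁻¹ * ∑' j, B j ^ 2 := by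
    simp only [hu, mul_pow, hhalf]
    rw [ENNReal.tsum_prod' (f := fun x => Q ^ x.2 * B x.1 ^ 2)]
    simp only [ENNReal.tsum_mul_right]
    rw [ENNReal.tsum_mul_left (f := fun j => B j ^ 2), hW]
  have hv2 : (∑' x, v x ^ 2) ≤ ∑' i, A i ^ 2 := by
    simp only [hv, mul_pow, hhalf]
    calc (∑' x, Q ^ x.2 * G x) ≤ ∑' x, G x := by
          refine ENNReal.tsum_le_tsum fun x => ?_
          exact mul_le_of_le_one_left zero_le (pow_le_one' hQ1 _)
      _ = ∑' i, A i ^ 2 := by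
          simp only [hG]
          exact ENNReal.tsum_fiberwise (fun i => A i ^ 2) p
  calc (∑' x, u x * v x)
      ≤ (∑' x, u x ^ 2) ^ ((1:ℝ)/2) * (∑' x, v x ^ 2) ^ ((1:ℝ)/2) := tsum_cs u v
    _ ≤ ((1 - Q)⁻¹ * ∑' j, B j ^ 2) ^ ((1:ℝ)/2) * (∑' i, A i ^ 2) ^ ((1:ℝ)/2) := by
        rw [hu2]
        exact mul_le_mul_right (ENNReal.rpow_le_rpow hv2 (by norm_num)) _
    _ = (1 - Q)⁻¹ ^ ((1:ℝ)/2) * (∑' j, B j ^ 2) ^ ((1:ℝ)/2) * (∑' i, A i ^ 2) ^ ((1:ℝ)/2) := by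
        rw [ENNReal.mul_rpow_of_nonneg _ _ (by norm_num)]
    _ ≤ (1 - Q)⁻¹ * (∑' i, A i ^ 2) ^ ((1:ℝ)/2) * (∑' j, B j ^ 2) ^ ((1:ℝ)/2) := by
        rw [mul_right_comm]
        refine mul_le_mul_left (mul_le_mul_left ?_ _) _
        have h1 : (1 : ℝ≥0∞) ≤ (1 - Q)⁻¹ := by
          rw [ENNReal.one_le_inv]
          exact tsub_le_self
        calc (1 - Q)⁻¹ ^ ((1:ℝ)/2) ≤ (1 - Q)⁻¹ ^ (1:ℝ) :=
              ENNReal.rpow_le_rpow_of_exponent_le h1 (by norm_num)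
          _ = (1 - Q)⁻¹ := ENNReal.rpow_one _
    _ = ENNReal.ofReal ((1 - q)⁻¹) * (∑' i, ENNReal.ofReal (a i ^ 2)) ^ ((1:ℝ)/2) *
          (∑' j, ENNReal.ofReal (b j ^ 2)) ^ ((1:ℝ)/2) := by
        have e1 : (1 - Q)⁻¹ = ENNReal.ofReal ((1 - q)⁻¹) := by
          rw [hQ, ← ENNReal.ofReal_one, ← ENNReal.ofReal_sub _ hq0.le,
            ← ENNReal.ofReal_inv_of_pos (by linarith)]
        have e2 : (∑' i, A i ^ 2) = ∑' i, ENNReal.ofReal (a i ^ 2) :=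
          tsum_congr fun i => by rw [hA]; exact (ENNReal.ofReal_pow (ha i) 2).symm
        have e3 : (∑' j, B j ^ 2) = ∑' j, ENNReal.ofReal (b j ^ 2) :=
          tsum_congr fun j => by rw [hB]; exact (ENNReal.ofReal_pow (hb j) 2).symm
        rw [e1, e2, e3]
end

section
/- Let (X,ρ) be a metric space, μ a finite Borel measure on X, and k a Calderón–Zygmund kernel of order m > 0 with constants C_CZ, τ, δ_CZ that is additionally bounded: |k(x,y)| ≤ M for all x ≠ y. Define F(x) := ∫_X k(t,x) dμ(t). Let Λ ≥ 1 + 1/δ_CZ and K, A > 0. Let Q ⊆ X be a Borel set with D := diam(Q) ∈ (0,∞), μ(Q) > 0, and μ(λ·Q) ≤ K·λ^m·D^m for every λ ≥ 1, where λ·Q := {x ∈ X : dist(x,Q) ≤ (λ−1)·D}. Assume the testing bound ∫_Q |∫_{Λ·Q} k(t,x) dμ(t)|² dμ(x) ≤ A·μ(Λ·Q). Then ∫_Q |F(x) − ⟨F⟩_Q|² dμ(x) ≤ C·μ(Λ·Q), where ⟨F⟩_Q := μ(Q)^{−1}∫_Q F dμ and C depends only on K, Λ, τ, m, C_CZ,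 A (and not on M). -/
open MeasureTheory Metric
open scoped ENNReal NNReal

/-- The `λ`-dilation of a set `S` in a metric space:
`λ·S = {x : dist(x,S) ≤ (λ−1)·diam S}`. -/
noncomputable def dilate {X : Type*} [MetricSpace X] (S : Set X) (lam : ℝ) : Set X :=
  {z | infDist z S ≤ (lam - 1) * diam S}

lemma mem_dilate {X : Type*} [MetricSpace X] {S : Set X} {lam : ℝ} {z : X} :
    z ∈ dilate S lam ↔ infDist z S ≤ (lam - 1) * diam S := Iff.rfl

lemma annuli_bound {X : Type*} [MetricSpace X] [MeasurableSpace X]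
    (μ : Measure X) (Q : Set X) {m τ K Λ : ℝ}
    (hm : 0 < m) (hτ : 0 < τ) (hK : 0 < K) (hΛ : 2 ≤ Λ) (hD : 0 < diam Q)
    (growth : ∀ lam : ℝ, 1 ≤ lam →
      μ (dilate Q lam) ≤ ENNReal.ofReal (K * lam ^ m * diam Q ^ m)) :
    ∫⁻ t in (dilate Q Λ)ᶜ, ENNReal.ofReal (infDist t Q ^ (-(m + τ))) ∂μ ≤
      ENNReal.ofReal (K * Λ ^ m * 2 ^ m * (1 - 2 ^ (-τ))⁻¹ * diam Q ^ (-τ)) := by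
  classical
  set D := diam Q with hDdef
  have hΛ0 : (0:ℝ) < Λ := by linarith
  set S : ℕ → Set X := fun j => dilate Q (2 ^ j * Λ) with hS
  have hcover : (dilate Q Λ)ᶜ ⊆ ⋃ j : ℕ, (S (j+1) \ S j) := by
    intro t ht
    have ht' : (Λ - 1) * D < infDist t Q := not_le.1 ht
    have h0 : (0:ℝ) ≤ infDist t Q := infDist_nonneg
    have hex : ∃ j, t ∈ S j := by
      obtain ⟨n, hn⟩ := pow_unbounded_of_one_lt (infDist t Q / D + 1) (one_lt_two (α := ℝ))
      refine ⟨n, ?_⟩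
      have h2n : (1:ℝ) ≤ 2 ^ n := one_le_pow₀ one_le_two
      show infDist t Q ≤ ((2:ℝ) ^ n * Λ - 1) * D
      have h1 : infDist t Q / D + 1 ≤ 2 ^ n * Λ := by nlinarith
      have h2 : infDist t Q / D ≤ 2 ^ n * Λ - 1 := by linarith
      calc infDist t Q = (infDist t Q / D) * D := by field_simp
        _ ≤ ((2:ℝ) ^ n * Λ - 1) * D := by
            apply mul_le_mul_of_nonneg_right h2 hD.le
    have hj : t ∈ S (Nat.find hex) := Nat.find_spec hex
    have hj0 : Nat.find hex ≠ 0 := by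
      intro h
      rw [h] at hj
      have : infDist t Q ≤ ((2:ℝ) ^ 0 * Λ - 1) * D := hj
      rw [pow_zero, one_mul] at this
      exact absurd this (not_le.2 ht')
    obtain ⟨i, hi⟩ := Nat.exists_eq_succ_of_ne_zero hj0
    refine Set.mem_iUnion.2 ⟨i, ?_, ?_⟩
    · rw [hi] at hj; exact hj
    · exact Nat.find_min hex (by omega)
  have hr0 : (0:ℝ) < 2 ^ (-τ) := Real.rpow_pos_of_pos two_pos _
  have hr1 : (2:ℝ) ^ (-τ) < 1 :=
    Real.rpow_lt_one_of_one_lt_of_neg one_lt_two (by linarith)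
  set c : ℝ := K * Λ ^ m * 2 ^ m * D ^ (-τ) with hc
  have hc0 : 0 ≤ c := by
    have := Real.rpow_nonneg (le_of_lt hΛ0) m
    have := Real.rpow_nonneg (by norm_num : (0:ℝ) ≤ 2) m
    have := Real.rpow_nonneg hD.le (-τ)
    positivity
  have key : ∀ j : ℕ, ∫⁻ t in S (j+1) \ S j, ENNReal.ofReal (infDist t Q ^ (-(m + τ))) ∂μ
      ≤ ENNReal.ofReal (c * ((2:ℝ) ^ (-τ)) ^ j) := by
    intro j
    have h2j : (1:ℝ) ≤ 2 ^ j := one_le_pow₀ one_le_two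
    have hlow : ∀ t ∈ S (j+1) \ S j, (2:ℝ) ^ j * D ≤ infDist t Q := by
      intro t ht
      have h1 : ¬ infDist t Q ≤ ((2:ℝ) ^ j * Λ - 1) * D := ht.2
      have h2 : ((2:ℝ) ^ j * Λ - 1) * D < infDist t Q := not_le.1 h1
      have h3 : (2:ℝ) ^ j ≤ 2 ^ j * Λ - 1 := by nlinarith
      nlinarith [mul_le_mul_of_nonneg_right h3 hD.le]
    have hbound : ∀ t ∈ S (j+1) \ S j,
        ENNReal.ofReal (infDist t Q ^ (-(m + τ))) ≤
          ENNReal.ofReal (((2:ℝ) ^ j * D) ^ (-(m + τ))) := by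
      intro t ht
      apply ENNReal.ofReal_le_ofReal
      exact Real.rpow_le_rpow_of_nonpos (by positivity) (hlow t ht) (by linarith)
    calc ∫⁻ t in S (j+1) \ S j, ENNReal.ofReal (infDist t Q ^ (-(m + τ))) ∂μ
        ≤ ∫⁻ _ in S (j+1) \ S j, ENNReal.ofReal (((2:ℝ) ^ j * D) ^ (-(m + τ))) ∂μ :=
          setLIntegral_mono measurable_const hbound
      _ = ENNReal.ofReal (((2:ℝ) ^ j * D) ^ (-(m + τ))) * μ (S (j+1) \ S j) :=
          setLIntegral_const _ _
      _ ≤ ENNReal.ofReal (((2:ℝ) ^ j * D) ^ (-(m + τ))) * μ (S (j+1)) := by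
          gcongr
          exact Set.diff_subset
      _ ≤ ENNReal.ofReal (((2:ℝ) ^ j * D) ^ (-(m + τ))) *
            ENNReal.ofReal (K * ((2:ℝ) ^ (j+1) * Λ) ^ m * D ^ m) := by
          gcongr
          exact growth _ (by nlinarith [one_le_pow₀ (one_le_two (α := ℝ)) (n := j+1)])
      _ = ENNReal.ofReal ((((2:ℝ) ^ j * D) ^ (-(m + τ))) * (K * ((2:ℝ) ^ (j+1) * Λ) ^ m * D ^ m)) := by
          rw [← ENNReal.ofReal_mul (by positivity)]
      _ = ENNReal.ofReal (c * ((2:ℝ) ^ (-τ)) ^ j) := by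
          congr 1
          have h2 : (0:ℝ) ≤ 2 := by norm_num
          rw [Real.mul_rpow (by positivity) hD.le,
            Real.mul_rpow (by positivity) hΛ0.le,
            ← Real.rpow_natCast (2:ℝ) j, ← Real.rpow_natCast (2:ℝ) (j+1),
            ← Real.rpow_natCast ((2:ℝ) ^ (-τ)) j,
            ← Real.rpow_mul h2, ← Real.rpow_mul h2, ← Real.rpow_mul h2]
          rw [hc]
          push_cast
          rw [show ((j:ℝ) * -(m + τ)) = (-τ * (j:ℝ)) + ((-m) * (j:ℝ)) by ring,
            Real.rpow_add two_pos, show (((j:ℝ)+1) * m) = m + (m * (j:ℝ)) by ring,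
            Real.rpow_add two_pos,
            show (-(m+τ)) = (-τ) + (-m) by ring, Real.rpow_add hD]
          have hDm : D ^ (-m) * D ^ m = 1 := by
            rw [← Real.rpow_add hD]; simp
          have h2m : (2:ℝ) ^ ((-m) * (j:ℝ)) * (2:ℝ) ^ (m * (j:ℝ)) = 1 := by
            rw [← Real.rpow_add two_pos]; simp
          linear_combination (K * (2:ℝ) ^ (-τ * (j:ℝ)) * (2:ℝ) ^ m * Λ ^ m * D ^ (-τ) *
              (2:ℝ) ^ (-m * (j:ℝ)) * (2:ℝ) ^ (m * (j:ℝ))) * hDm +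
            (K * (2:ℝ) ^ (-τ * (j:ℝ)) * (2:ℝ) ^ m * Λ ^ m * D ^ (-τ)) * h2m
  calc ∫⁻ t in (dilate Q Λ)ᶜ, ENNReal.ofReal (infDist t Q ^ (-(m + τ))) ∂μ
      ≤ ∫⁻ t in ⋃ j : ℕ, (S (j+1) \ S j), ENNReal.ofReal (infDist t Q ^ (-(m + τ))) ∂μ :=
        lintegral_mono_set hcover
    _ ≤ ∑' j : ℕ, ∫⁻ t in S (j+1) \ S j, ENNReal.ofReal (infDist t Q ^ (-(m + τ))) ∂μ :=
        lintegral_iUnion_le _ _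
    _ ≤ ∑' j : ℕ, ENNReal.ofReal (c * ((2:ℝ) ^ (-τ)) ^ j) := ENNReal.tsum_le_tsum key
    _ = ENNReal.ofReal c * ∑' j : ℕ, (ENNReal.ofReal ((2:ℝ) ^ (-τ))) ^ j := by
        rw [← ENNReal.tsum_mul_left]
        refine tsum_congr fun j => ?_
        rw [ENNReal.ofReal_mul hc0, ENNReal.ofReal_pow hr0.le]
    _ = ENNReal.ofReal c * (1 - ENNReal.ofReal ((2:ℝ) ^ (-τ)))⁻¹ := by
        rw [ENNReal.tsum_geometric]
    _ = ENNReal.ofReal (K * Λ ^ m * 2 ^ m * (1 - 2 ^ (-τ))⁻¹ * D ^ (-τ)) := by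
        rw [← ENNReal.ofReal_one, ← ENNReal.ofReal_sub _ hr0.le,
          ← ENNReal.ofReal_inv_of_pos (by linarith : (0:ℝ) < 1 - 2 ^ (-τ)), ← ENNReal.ofReal_mul hc0]
        congr 1
        rw [hc]; ring

set_option maxHeartbeats 1000000 in
/-- `T*1` is a pseudo-BMO function: for a bounded Calderón–Zygmund kernel `k` of order `m`,
a finite measure `μ`, a set `Q` of positive finite diameter `D` with `μ(λ·Q) ≤ K λ^m D^m`
for all `λ ≥ 1`, `Λ ≥ 1 + 1/δ_CZ`, and the testing bound
`∫_Q |∫_{ΛQ} k(t,x) dμ(t)|² dμ(x) ≤ A·μ(ΛQ)`, the function `F(x) = ∫ k(t,x) dμ(t)` satisfies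
`∫_Q |F − ⟨F⟩_Q|² dμ ≤ C·μ(ΛQ)` with `C` depending only on `K, Λ, τ, m, C_CZ, A` (not on the
bound `M` of the kernel). -/
theorem Tstar_one_pseudoBMO (m τ C_CZ K Λ A : ℝ)
    (hm : 0 < m) (hτ : 0 < τ) (hCCZ : 0 < C_CZ) (hK : 0 < K) (hA : 0 < A) :
    ∃ C : ℝ, 0 < C ∧
      ∀ (X : Type) [MetricSpace X] [MeasurableSpace X] [BorelSpace X]
        (μ : Measure X) [IsFiniteMeasure μ] (δ_CZ M : ℝ) (k : X → X → ℂ) (Q : Set X),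
        0 < δ_CZ → δ_CZ < 1 →
        Measurable (Function.uncurry k) →
        (∀ x y : X, x ≠ y → ‖k x y‖ ≤ C_CZ / dist x y ^ m) →
        (∀ x y y' : X, x ≠ y → x ≠ y' → dist y y' ≤ δ_CZ * dist x y →
          ‖k x y - k x y'‖ + ‖k y x - k y' x‖ ≤ C_CZ * dist y y' ^ τ / dist x y ^ (m + τ)) →
        (∀ x y : X, x ≠ y → ‖k x y‖ ≤ M) →
        MeasurableSet Q → Bornology.IsBounded Q → 0 < diam Q → 0 < μ Q →
        (∀ lam : ℝ, 1 ≤ lam →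
          μ (dilate Q lam) ≤ ENNReal.ofReal (K * lam ^ m * diam Q ^ m)) →
        1 + 1 / δ_CZ ≤ Λ →
        (∫⁻ x in Q, ENNReal.ofReal (‖∫ t in dilate Q Λ, k t x ∂μ‖ ^ 2) ∂μ ≤
          ENNReal.ofReal A * μ (dilate Q Λ)) →
        ∫⁻ x in Q, ENNReal.ofReal
            (‖(∫ t, k t x ∂μ) - (μ Q).toReal⁻¹ • ∫ z in Q, (∫ t, k t z ∂μ) ∂μ‖ ^ 2) ∂μ ≤
          ENNReal.ofReal C * μ (dilate Q Λ) := by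
  set B : ℝ := C_CZ * (K * Λ ^ m * 2 ^ m * (1 - 2 ^ (-τ))⁻¹) with hBdef
  refine ⟨6 * A + 4 * B ^ 2 + 1, by positivity, ?_⟩
  intro X _ _ _ μ _ δ M k Q hδ0 hδ1 hkmeas hksize hksmooth hkM hQmeas hQb hQD hQpos growth hΛδ htest
  classical
  set D := diam Q with hDdef
  set ΛQ := dilate Q Λ with hΛQdef
  have hδinv : (1:ℝ) < 1 / δ := one_lt_one_div hδ0 hδ1
  have hΛ2 : (2:ℝ) ≤ Λ := by linarith
  have hΛ1 : (1:ℝ) ≤ Λ := by linarith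
  have hΛ0 : (0:ℝ) < Λ := by linarith
  have hr1 : (2:ℝ) ^ (-τ) < 1 := Real.rpow_lt_one_of_one_lt_of_neg one_lt_two (by linarith)
  have hB0 : 0 ≤ B := by
    have h1 := Real.rpow_nonneg hΛ0.le m
    have h2 := Real.rpow_nonneg (by norm_num : (0:ℝ) ≤ 2) m
    have h3 : (0:ℝ) < (1 - 2 ^ (-τ))⁻¹ := by
      apply inv_pos.2; linarith
    positivity
  have hQsub : Q ⊆ ΛQ := by
    intro z hz
    show infDist z Q ≤ (Λ - 1) * D
    rw [infDist_zero_of_mem hz]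
    have : (0:ℝ) ≤ (Λ - 1) * D := by nlinarith [diam_nonneg (s := Q)]
    linarith
  have hΛQmeas : MeasurableSet ΛQ :=
    (isClosed_le (continuous_infDist_pt Q) continuous_const).measurableSet
  have hkxmeas : ∀ x : X, Measurable fun t => k t x := fun x =>
    hkmeas.comp (measurable_id.prodMk measurable_const)
  have hInt : ∀ x : X, Integrable (fun t => k t x) μ := by
    intro x
    refine (integrable_const (max M ‖k x x‖)).mono'
      (hkxmeas x).aestronglyMeasurable (ae_of_all _ fun t => ?_)
    by_cases h : t = x
    · subst h; exact le_max_right _ _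
    · exact (hkM t x h).trans (le_max_left _ _)
  set F : X → ℂ := fun x => ∫ t, k t x ∂μ with hF
  set Fin : X → ℂ := fun x => ∫ t in ΛQ, k t x ∂μ with hFin
  set Fout : X → ℂ := fun x => ∫ t in ΛQᶜ, k t x ∂μ with hFout
  have hsplit : ∀ x, F x = Fin x + Fout x := fun x =>
    (integral_add_compl hΛQmeas (hInt x)).symm
  have hswapmeas : StronglyMeasurable (fun p : X × X => k p.2 p.1) :=
    (hkmeas.comp measurable_swap).stronglyMeasurable
  have hFinmeas : StronglyMeasurable Fin := hswapmeas.integral_prod_right'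
  have hFoutmeas : StronglyMeasurable Fout := hswapmeas.integral_prod_right'
  -- oscillation bound for the outer part
  have hosc : ∀ x ∈ Q, ∀ z ∈ Q, ‖Fout x - Fout z‖ ≤ B := by
    intro x hx z hz
    have hxz : dist x z ≤ D := dist_le_diam_of_mem hQb hx hz
    have hsub : Fout x - Fout z = ∫ t in ΛQᶜ, (k t x - k t z) ∂μ :=
      (integral_sub ((hInt x).restrict) ((hInt z).restrict)).symm
    rw [hsub]
    have hb1 := norm_integral_le_lintegral_norm (μ := μ.restrict ΛQᶜ)
      (f := fun t => k t x - k t z)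
    refine hb1.trans ?_
    have hmg : Measurable fun t => ENNReal.ofReal (C_CZ * D ^ τ * infDist t Q ^ (-(m + τ))) := by
      apply Measurable.ennreal_ofReal
      exact measurable_const.mul
        ((continuous_infDist_pt Q).measurable.pow measurable_const)
    have hpt : ∀ t ∈ ΛQᶜ, ENNReal.ofReal ‖k t x - k t z‖ ≤
        ENNReal.ofReal (C_CZ * D ^ τ * infDist t Q ^ (-(m + τ))) := by
      intro t ht
      have hid : (Λ - 1) * D < infDist t Q := not_le.1 ht
      have hDle : D ≤ (Λ - 1) * D := by nlinarith
      have hid0 : 0 < infDist t Q := by linarith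
      have hdx : infDist t Q ≤ dist t x := infDist_le_dist_of_mem hx
      have hdz : infDist t Q ≤ dist t z := infDist_le_dist_of_mem hz
      have hdx0 : 0 < dist t x := by linarith
      have htx : t ≠ x := by
        intro h; subst h; rw [dist_self] at hdx0; exact lt_irrefl _ hdx0
      have htz : t ≠ z := by
        intro h; subst h; rw [dist_self] at hdz; linarith
      have hcond : dist x z ≤ δ * dist t x := by
        have h1 : 1 / δ ≤ Λ - 1 := by linarith
        have h2 : 1 ≤ (Λ - 1) * δ := by
          rw [div_le_iff₀ hδ0] at h1; linarith
        calc dist x z ≤ D := hxz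
          _ ≤ δ * ((Λ - 1) * D) := by nlinarith
          _ ≤ δ * dist t x := by nlinarith
      have hsm := hksmooth t x z htx htz hcond
      have h2 : ‖k t x - k t z‖ ≤ C_CZ * dist x z ^ τ / dist t x ^ (m + τ) := by
        have := norm_nonneg (k x t - k z t); linarith
      apply ENNReal.ofReal_le_ofReal
      have hnum : C_CZ * dist x z ^ τ ≤ C_CZ * D ^ τ := by
        have := Real.rpow_le_rpow dist_nonneg hxz hτ.le
        nlinarith
      have hden : infDist t Q ^ (m + τ) ≤ dist t x ^ (m + τ) :=
        Real.rpow_le_rpow hid0.le hdx (by linarith)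
      have hden0 : 0 < infDist t Q ^ (m + τ) := Real.rpow_pos_of_pos hid0 _
      have h3 : C_CZ * dist x z ^ τ / dist t x ^ (m + τ) ≤
          C_CZ * D ^ τ / infDist t Q ^ (m + τ) :=
        div_le_div₀ (by positivity) hnum hden0 hden
      have h4 : C_CZ * D ^ τ / infDist t Q ^ (m + τ) =
          C_CZ * D ^ τ * infDist t Q ^ (-(m + τ)) := by
        rw [Real.rpow_neg hid0.le, div_eq_mul_inv]
      linarith
    calc ((∫⁻ t in ΛQᶜ, ENNReal.ofReal ‖k t x - k t z‖ ∂μ)).toReal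
        ≤ (ENNReal.ofReal (C_CZ * D ^ τ) *
            ENNReal.ofReal (K * Λ ^ m * 2 ^ m * (1 - 2 ^ (-τ))⁻¹ * D ^ (-τ))).toReal := by
          apply ENNReal.toReal_mono
          · exact ENNReal.mul_ne_top ENNReal.ofReal_ne_top ENNReal.ofReal_ne_top
          calc ∫⁻ t in ΛQᶜ, ENNReal.ofReal ‖k t x - k t z‖ ∂μ
              ≤ ∫⁻ t in ΛQᶜ, ENNReal.ofReal (C_CZ * D ^ τ * infDist t Q ^ (-(m + τ))) ∂μ :=
                setLIntegral_mono hmg hpt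
            _ = ∫⁻ t in ΛQᶜ, ENNReal.ofReal (C_CZ * D ^ τ) *
                  ENNReal.ofReal (infDist t Q ^ (-(m + τ))) ∂μ := by
                refine lintegral_congr fun t => ?_
                rw [← ENNReal.ofReal_mul (by positivity)]
            _ = ENNReal.ofReal (C_CZ * D ^ τ) *
                  ∫⁻ t in ΛQᶜ, ENNReal.ofReal (infDist t Q ^ (-(m + τ))) ∂μ :=
                lintegral_const_mul _ ((continuous_infDist_pt Q).measurable.pow
                  measurable_const).ennreal_ofReal
            _ ≤ ENNReal.ofReal (C_CZ * D ^ τ) *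
                  ENNReal.ofReal (K * Λ ^ m * 2 ^ m * (1 - 2 ^ (-τ))⁻¹ * D ^ (-τ)) := by
                gcongr
                exact annuli_bound μ Q hm hτ hK hΛ2 hQD growth
      _ = B := by
          have hDτ : D ^ τ * D ^ (-τ) = 1 := by
            rw [← Real.rpow_add hQD]; simp
          have hprod : (C_CZ * D ^ τ) * (K * Λ ^ m * 2 ^ m * (1 - 2 ^ (-τ))⁻¹ * D ^ (-τ)) = B := by
            rw [hBdef]
            linear_combination (C_CZ * (K * Λ ^ m * 2 ^ m * (1 - 2 ^ (-τ))⁻¹)) * hDτ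
          rw [← ENNReal.ofReal_mul (by positivity), hprod, ENNReal.toReal_ofReal hB0]
  -- Fout is bounded on Q, hence integrable on Q
  have hFoutbd : ∀ z ∈ Q, ‖Fout z‖ ≤ |M| * (μ Set.univ).toReal := by
    intro z hz
    have hbd : ∀ᵐ t ∂(μ.restrict ΛQᶜ), ‖k t z‖ ≤ |M| := by
      rw [ae_restrict_iff' hΛQmeas.compl]
      refine ae_of_all _ fun t ht => ?_
      have htz : t ≠ z := fun h => ht (h ▸ hQsub hz)
      exact (hkM t z htz).trans (le_abs_self M)
    calc ‖Fout z‖ ≤ ∫ _t in ΛQᶜ, |M| ∂μ :=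
        norm_integral_le_of_norm_le (integrable_const _) hbd
      _ = (μ ΛQᶜ).toReal * |M| := by rw [setIntegral_const, smul_eq_mul, measureReal_def]
      _ ≤ (μ Set.univ).toReal * |M| :=
        mul_le_mul_of_nonneg_right
          (ENNReal.toReal_mono (measure_ne_top μ _) (measure_mono (Set.subset_univ _)))
          (abs_nonneg M)
      _ = |M| * (μ Set.univ).toReal := mul_comm _ _
  have hFoutInt : IntegrableOn Fout Q μ := by
    refine (integrable_const (|M| * (μ Set.univ).toReal)).mono'
      hFoutmeas.aestronglyMeasurable.restrict ?_
    rw [ae_restrict_iff' hQmeas]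
    exact ae_of_all _ hFoutbd
  -- L² and L¹ control on Fin over Q
  set I2 : ℝ≥0∞ := ∫⁻ x in Q, ENNReal.ofReal (‖Fin x‖ ^ 2) ∂μ with hI2
  have hI2le : I2 ≤ ENNReal.ofReal A * μ ΛQ := htest
  have hI2top : I2 ≠ ⊤ :=
    ne_top_of_le_ne_top (ENNReal.mul_ne_top ENNReal.ofReal_ne_top (measure_ne_top μ _)) hI2le
  set J : ℝ≥0∞ := ∫⁻ x in Q, ENNReal.ofReal ‖Fin x‖ ∂μ with hJ
  have hFinm2 : Measurable fun x => ENNReal.ofReal ‖Fin x‖ :=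
    hFinmeas.measurable.norm.ennreal_ofReal
  have hrpow2 : ∀ x : X, (ENNReal.ofReal ‖Fin x‖) ^ (2:ℝ) = ENNReal.ofReal (‖Fin x‖ ^ 2) := by
    intro x
    rw [show (2:ℝ) = ((2:ℕ):ℝ) by norm_num, ENNReal.rpow_natCast,
      ENNReal.ofReal_pow (norm_nonneg _)]
  have hCS : J ≤ I2 ^ (1/2 : ℝ) * (μ Q) ^ (1/2 : ℝ) := by
    have h := ENNReal.lintegral_mul_le_Lp_mul_Lq (μ.restrict Q)
      (Real.HolderConjugate.two_two : Real.HolderConjugate 2 2)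
      hFinm2.aemeasurable (aemeasurable_const (b := (1:ℝ≥0∞)))
    simp only [Pi.mul_apply, mul_one, ENNReal.one_rpow, lintegral_const,
      Measure.restrict_apply_univ, one_mul] at h
    calc J ≤ (∫⁻ x in Q, (ENNReal.ofReal ‖Fin x‖) ^ (2:ℝ) ∂μ) ^ (1/2:ℝ) * (μ Q) ^ (1/2:ℝ) := h
      _ = I2 ^ (1/2:ℝ) * (μ Q) ^ (1/2:ℝ) := by
          rw [lintegral_congr fun x => hrpow2 x]
  have hJtop : J ≠ ⊤ :=
    ne_top_of_le_ne_top (ENNReal.mul_ne_top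
      (ENNReal.rpow_ne_top_of_nonneg (by norm_num) hI2top)
      (ENNReal.rpow_ne_top_of_nonneg (by norm_num) (measure_ne_top μ _))) hCS
  have hFinInt : IntegrableOn Fin Q μ := by
    refine ⟨hFinmeas.aestronglyMeasurable.restrict, ?_⟩
    rw [hasFiniteIntegral_iff_norm, ← hJ]
    exact lt_top_iff_ne_top.2 hJtop
  have hFInt : IntegrableOn F Q μ :=
    (hFinInt.add hFoutInt).congr (ae_of_all _ fun x => (hsplit x).symm)
  -- averages
  set β : ℝ := (μ Q).toReal⁻¹ with hβdef
  have hμQpos : 0 < (μ Q).toReal := ENNReal.toReal_pos hQpos.ne' (measure_ne_top μ Q)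
  have hβmul : β * (μ Q).toReal = 1 := inv_mul_cancel₀ hμQpos.ne'
  have hβ0 : 0 ≤ β := inv_nonneg.2 ENNReal.toReal_nonneg
  set a : ℂ := β • ∫ z in Q, F z ∂μ with ha
  set r : ℝ := β * ∫ z in Q, ‖Fin z‖ ∂μ with hr
  have hr0 : 0 ≤ r := mul_nonneg hβ0 (integral_nonneg fun z => norm_nonneg _)
  have hadecomp : a = β • (∫ z in Q, Fin z ∂μ) + β • (∫ z in Q, Fout z ∂μ) := by
    rw [ha, ← smul_add, ← integral_add hFinInt hFoutInt]
    exact congrArg _ (integral_congr_ae (ae_of_all _ fun z => hsplit z))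
  -- pointwise bound
  have hpt : ∀ x ∈ Q, ‖F x - a‖ ≤ ‖Fin x‖ + (r + B) := by
    intro x hx
    rw [hsplit x, hadecomp]
    have hout : ‖Fout x - β • ∫ z in Q, Fout z ∂μ‖ ≤ B := by
      have he : Fout x - β • ∫ z in Q, Fout z ∂μ =
          β • ∫ z in Q, (Fout x - Fout z) ∂μ := by
        rw [integral_sub (integrable_const _) hFoutInt, setIntegral_const, smul_sub,
          smul_smul, measureReal_def, hβmul, one_smul]
      rw [he, norm_smul, Real.norm_eq_abs, abs_of_nonneg hβ0]
      have hb : ‖∫ z in Q, (Fout x - Fout z) ∂μ‖ ≤ (μ Q).toReal * B := by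
        have hbd : ∀ᵐ z ∂(μ.restrict Q), ‖Fout x - Fout z‖ ≤ B := by
          rw [ae_restrict_iff' hQmeas]; exact ae_of_all _ fun z hz => hosc x hx z hz
        calc ‖∫ z in Q, (Fout x - Fout z) ∂μ‖ ≤ ∫ _z in Q, B ∂μ :=
            norm_integral_le_of_norm_le (integrable_const _) hbd
          _ = (μ Q).toReal * B := by rw [setIntegral_const, smul_eq_mul, measureReal_def]
      calc β * ‖∫ z in Q, (Fout x - Fout z) ∂μ‖ ≤ β * ((μ Q).toReal * B) := by nlinarith
        _ = B := by rw [← mul_assoc, hβmul, one_mul]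
    have hmid : ‖β • ∫ z in Q, Fin z ∂μ‖ ≤ r := by
      rw [norm_smul, Real.norm_eq_abs, abs_of_nonneg hβ0, hr]
      exact mul_le_mul_of_nonneg_left (norm_integral_le_integral_norm _) hβ0
    have he2 : Fin x + Fout x - (β • (∫ z in Q, Fin z ∂μ) + β • ∫ z in Q, Fout z ∂μ) =
        (Fin x - β • ∫ z in Q, Fin z ∂μ) + (Fout x - β • ∫ z in Q, Fout z ∂μ) := by
      ring
    rw [he2]
    calc ‖(Fin x - β • ∫ z in Q, Fin z ∂μ) + (Fout x - β • ∫ z in Q, Fout z ∂μ)‖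
        ≤ ‖Fin x - β • ∫ z in Q, Fin z ∂μ‖ + ‖Fout x - β • ∫ z in Q, Fout z ∂μ‖ :=
          norm_add_le _ _
      _ ≤ (‖Fin x‖ + r) + B := by
          have h1 := norm_sub_le (Fin x) (β • ∫ z in Q, Fin z ∂μ)
          linarith
      _ = ‖Fin x‖ + (r + B) := by ring
  -- Cauchy–Schwarz conclusion on r
  have hJeq : ∫ z in Q, ‖Fin z‖ ∂μ = J.toReal := by
    rw [integral_eq_lintegral_of_nonneg_ae (ae_of_all _ fun z => norm_nonneg _)
      hFinmeas.norm.aestronglyMeasurable.restrict, ← hJ]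
  have hrsq : r ^ 2 ≤ β * I2.toReal := by
    have hJ2 : J * J ≤ I2 * μ Q := by
      calc J * J ≤ (I2 ^ (1/2:ℝ) * (μ Q) ^ (1/2:ℝ)) * (I2 ^ (1/2:ℝ) * (μ Q) ^ (1/2:ℝ)) :=
          mul_le_mul hCS hCS zero_le zero_le
        _ = (I2 ^ (1/2:ℝ) * I2 ^ (1/2:ℝ)) * ((μ Q) ^ (1/2:ℝ) * (μ Q) ^ (1/2:ℝ)) := by ring
        _ = I2 * μ Q := by
            rw [← ENNReal.rpow_add_of_nonneg _ _ (by norm_num) (by norm_num),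
              ← ENNReal.rpow_add_of_nonneg _ _ (by norm_num) (by norm_num)]
            norm_num
    have h1 : (J * J).toReal ≤ (I2 * μ Q).toReal :=
      ENNReal.toReal_mono (ENNReal.mul_ne_top hI2top (measure_ne_top μ _)) hJ2
    rw [ENNReal.toReal_mul, ENNReal.toReal_mul] at h1
    rw [hr, hJeq]
    calc (β * J.toReal) ^ 2 = β * β * (J.toReal * J.toReal) := by ring
      _ ≤ β * β * (I2.toReal * (μ Q).toReal) := by nlinarith
      _ = β * I2.toReal * (β * (μ Q).toReal) := by ring
      _ = β * I2.toReal := by rw [hβmul, mul_one]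
  -- pointwise squared bound
  have hptsq : ∀ x ∈ Q, ENNReal.ofReal (‖F x - a‖ ^ 2) ≤
      2 * ENNReal.ofReal (‖Fin x‖ ^ 2) + ENNReal.ofReal (4 * r ^ 2 + 4 * B ^ 2) := by
    intro x hx
    have h := hpt x hx
    have hsq : ‖F x - a‖ ^ 2 ≤ 2 * ‖Fin x‖ ^ 2 + (4 * r ^ 2 + 4 * B ^ 2) := by
      nlinarith [norm_nonneg (F x - a), norm_nonneg (Fin x),
        sq_nonneg (‖Fin x‖ - (r + B)), sq_nonneg (r - B)]
    calc ENNReal.ofReal (‖F x - a‖ ^ 2)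
        ≤ ENNReal.ofReal (2 * ‖Fin x‖ ^ 2 + (4 * r ^ 2 + 4 * B ^ 2)) :=
          ENNReal.ofReal_le_ofReal hsq
      _ = ENNReal.ofReal (2 * ‖Fin x‖ ^ 2) + ENNReal.ofReal (4 * r ^ 2 + 4 * B ^ 2) :=
          ENNReal.ofReal_add (by positivity) (by positivity)
      _ = 2 * ENNReal.ofReal (‖Fin x‖ ^ 2) + ENNReal.ofReal (4 * r ^ 2 + 4 * B ^ 2) := by
          rw [ENNReal.ofReal_mul (by norm_num : (0:ℝ) ≤ 2), ENNReal.ofReal_ofNat]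
  have hβQ : ENNReal.ofReal β * μ Q = 1 := by
    rw [hβdef, ENNReal.ofReal_inv_of_pos hμQpos,
      ENNReal.ofReal_toReal (measure_ne_top μ Q)]
    exact ENNReal.inv_mul_cancel hQpos.ne' (measure_ne_top μ Q)
  have hmeas2 : Measurable fun x => 2 * ENNReal.ofReal (‖Fin x‖ ^ 2) :=
    (hFinmeas.measurable.norm.pow measurable_const).ennreal_ofReal.const_mul 2
  show ∫⁻ x in Q, ENNReal.ofReal (‖F x - a‖ ^ 2) ∂μ ≤
      ENNReal.ofReal (6 * A + 4 * B ^ 2 + 1) * μ ΛQ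
  calc ∫⁻ x in Q, ENNReal.ofReal (‖F x - a‖ ^ 2) ∂μ
      ≤ ∫⁻ x in Q, (2 * ENNReal.ofReal (‖Fin x‖ ^ 2) +
          ENNReal.ofReal (4 * r ^ 2 + 4 * B ^ 2)) ∂μ :=
        setLIntegral_mono (hmeas2.add measurable_const) hptsq
    _ = 2 * I2 + ENNReal.ofReal (4 * r ^ 2 + 4 * B ^ 2) * μ Q := by
        rw [lintegral_add_right _ measurable_const,
          lintegral_const_mul _ (hFinmeas.measurable.norm.pow measurable_const).ennreal_ofReal,
          setLIntegral_const, ← hI2]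
    _ ≤ 2 * (ENNReal.ofReal A * μ ΛQ) +
          (ENNReal.ofReal (4 * r ^ 2) * μ Q + ENNReal.ofReal (4 * B ^ 2) * μ Q) := by
        refine add_le_add (mul_le_mul_right hI2le 2) (le_of_eq ?_)
        rw [ENNReal.ofReal_add (by positivity) (by positivity), add_mul]
    _ ≤ 2 * (ENNReal.ofReal A * μ ΛQ) +
          (4 * (ENNReal.ofReal A * μ ΛQ) + ENNReal.ofReal (4 * B ^ 2) * μ ΛQ) := by
        refine add_le_add_right (add_le_add ?_ (mul_le_mul_right (measure_mono hQsub) _)) _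
        calc ENNReal.ofReal (4 * r ^ 2) * μ Q
            ≤ ENNReal.ofReal (4 * (β * I2.toReal)) * μ Q := by
              exact mul_le_mul_left (ENNReal.ofReal_le_ofReal (by nlinarith)) _
          _ = 4 * (ENNReal.ofReal β * ENNReal.ofReal I2.toReal) * μ Q := by
              rw [ENNReal.ofReal_mul (by norm_num : (0:ℝ) ≤ 4),
                ENNReal.ofReal_mul hβ0, ENNReal.ofReal_ofNat]
          _ = 4 * I2 * (ENNReal.ofReal β * μ Q) := by
              rw [ENNReal.ofReal_toReal hI2top]; ring
          _ = 4 * I2 := by rw [hβQ, mul_one]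
          _ ≤ 4 * (ENNReal.ofReal A * μ ΛQ) := mul_le_mul_right hI2le 4
    _ = (2 * ENNReal.ofReal A + 4 * ENNReal.ofReal A + ENNReal.ofReal (4 * B ^ 2)) * μ ΛQ := by
        ring
    _ ≤ ENNReal.ofReal (6 * A + 4 * B ^ 2 + 1) * μ ΛQ := by
        refine mul_le_mul_left ?_ _
        have e1 : (2:ℝ≥0∞) * ENNReal.ofReal A = ENNReal.ofReal (2 * A) := by
          rw [ENNReal.ofReal_mul (by norm_num : (0:ℝ) ≤ 2), ENNReal.ofReal_ofNat]
        have e2 : (4:ℝ≥0∞) * ENNReal.ofReal A = ENNReal.ofReal (4 * A) := by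
          rw [ENNReal.ofReal_mul (by norm_num : (0:ℝ) ≤ 4), ENNReal.ofReal_ofNat]
        rw [e1, e2, ← ENNReal.ofReal_add (by positivity) (by positivity),
          ← ENNReal.ofReal_add (by positivity) (by positivity)]
        exact ENNReal.ofReal_le_ofReal (by linarith)
end

section
/- Let (X,ρ) be a metric space, μ a Borel measure on X, and k a Calderón–Zygmund kernel of order m > 0 with constants C_CZ, τ, δ_CZ. Let κ ∈ (0,1) and set α := τ/(2(m+τ)). Let x₀ ∈ X, σ > 0, L₀ ≥ σ, and let R^{(0)} ⊆ R^{(1)} ⊆ ⋯ ⊆ R^{(N)} be Borel subsets of X such that, with L_j := κ^{−j}·L₀ and some A > 0, one has μ(R^{(j)}) ≤ A·L_j^m and dist(x₀, R^{(j)}∖R^{(j−1)}) ≥ σ^α·L_j^{1−α} for j = 1,…,N, and additionally dist(x₀, X∖R^{(0)}) ≥ σ/δ_CZ. Let φ ∈ L¹(μ) be supported in the closed ball {x : ρ(x,x₀) ≤ σ} with ∫_X φ dμ = 0. Then |∫_{R^{(N)}∖R^{(0)}} ∫_X k(x,y) φ(x) dμ(x) dμ(y)| ≤ C·A·(σ/L₀)^{τ/2}·‖φ‖_{L¹(μ)},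 where C depends only on κ, τ, C_CZ. -/
set_option maxHeartbeats 1000000


open MeasureTheory Metric

/-- Estimate for the pairing of a mean-zero function `φ` supported in the ball of radius `σ`
around `x₀` with `T*(χ_{R^N∖R⁰})`, where `R⁰ ⊆ ⋯ ⊆ R^N` is an ascending chain of sets of
scales `L_j = κ^{−j}L₀` satisfying `μ(R^{(j)}) ≤ A L_j^m`,
`dist(x₀, R^{(j)}∖R^{(j−1)}) ≥ σ^α L_j^{1−α}` (with `α = τ/(2(m+τ))`), and
`dist(x₀, X∖R⁰) ≥ σ/δ_CZ`:
`|∫_{R^N∖R⁰} ∫ k(x,y) φ(x) dμ(x) dμ(y)| ≤ C·A·(σ/L₀)^{τ/2}·‖φ‖_{L¹}` with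
`C = C(κ,τ,C_CZ)`. -/
theorem paraproduct_tail_estimate (κ τ C_CZ : ℝ)
    (hκ0 : 0 < κ) (hκ1 : κ < 1) (hτ : 0 < τ) (hCCZ : 0 < C_CZ) :
    ∃ C : ℝ, 0 < C ∧
      ∀ (X : Type) [MetricSpace X] [MeasurableSpace X] [BorelSpace X]
        (μ : Measure X) (m δ_CZ A σ L₀ : ℝ) (k : X → X → ℂ) (x₀ : X) (N : ℕ)
        (R : ℕ → Set X) (φ : X → ℂ),
        0 < m → 0 < δ_CZ → δ_CZ < 1 → 0 < A → 0 < σ → σ ≤ L₀ →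
        Measurable (Function.uncurry k) →
        (∀ x y : X, x ≠ y → ‖k x y‖ ≤ C_CZ / dist x y ^ m) →
        (∀ x y y' : X, x ≠ y → x ≠ y' → dist y y' ≤ δ_CZ * dist x y →
          ‖k x y - k x y'‖ + ‖k y x - k y' x‖ ≤ C_CZ * dist y y' ^ τ / dist x y ^ (m + τ)) →
        (∀ j, MeasurableSet (R j)) →
        (∀ j, j < N → R j ⊆ R (j + 1)) →
        (∀ j, 1 ≤ j → j ≤ N → μ (R j) ≤ ENNReal.ofReal (A * (L₀ / κ ^ j) ^ m)) →
        (∀ j, 1 ≤ j → j ≤ N → ∀ y ∈ R j \ R (j - 1),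
          σ ^ (τ / (2 * (m + τ))) * (L₀ / κ ^ j) ^ (1 - τ / (2 * (m + τ))) ≤ dist x₀ y) →
        (∀ y, y ∉ R 0 → σ / δ_CZ ≤ dist x₀ y) →
        Integrable φ μ →
        (∀ x, φ x ≠ 0 → dist x x₀ ≤ σ) →
        (∫ x, φ x ∂μ) = 0 →
        ‖∫ y in R N \ R 0, (∫ x, k x y * φ x ∂μ) ∂μ‖ ≤
          C * A * (σ / L₀) ^ (τ / 2) * ∫ x, ‖φ x‖ ∂μ := by
  classical
  set r : ℝ := κ ^ (τ / 2) with hr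
  have hr0 : 0 < r := Real.rpow_pos_of_pos hκ0 _
  have hr1 : r < 1 := Real.rpow_lt_one hκ0.le hκ1 (by positivity)
  have h1r : 0 < 1 - r := by linarith
  refine ⟨C_CZ / (1 - r), by positivity, ?_⟩
  intro X _ _ _ μ m δ_CZ A σ L₀ k x₀ N R φ hm hδ0 hδ1 hA hσ hσL hkm hk hk' hRm hRchain
    hRμ hRdist hRfar hφint hsupp hmean
  have hL0 : 0 < L₀ := hσ.trans_le hσL
  have hmτ : 0 < m + τ := by linarith
  set α : ℝ := τ / (2 * (m + τ)) with hα
  have hα0 : 0 < α := by positivity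
  have hα1 : α < 1 := by
    rw [hα, div_lt_one (by positivity)]; linarith
  set Φ : ℝ := ∫ x, ‖φ x‖ ∂μ with hΦdef
  have hΦ0 : 0 ≤ Φ := integral_nonneg fun x => norm_nonneg _
  have hσδ : σ < σ / δ_CZ := by
    rw [lt_div_iff₀ hδ0]; nlinarith
  -- key pointwise bound
  have key : ∀ y, y ∉ R 0 →
      ‖∫ x, k x y * φ x ∂μ‖ ≤ C_CZ * σ ^ τ / dist x₀ y ^ (m + τ) * Φ := by
    intro y hy
    have hD : σ / δ_CZ ≤ dist x₀ y := hRfar y hy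
    have hσD : σ < dist x₀ y := hσδ.trans_le hD
    have hDpos : 0 < dist x₀ y := hσ.trans hσD
    have hyx₀ : y ≠ x₀ := by
      intro h; rw [h] at hDpos; simp at hDpos
    set B : ℝ := C_CZ * σ ^ τ / dist x₀ y ^ (m + τ) with hB
    have hB0 : 0 ≤ B := by positivity
    have hbound : ∀ x, ‖(k x y - k x₀ y) * φ x‖ ≤ B * ‖φ x‖ := by
      intro x
      by_cases hx : φ x = 0
      · simp [hx]
      · have hxσ : dist x x₀ ≤ σ := hsupp x hx
        have hxy : y ≠ x := by
          intro h
          rw [h, dist_comm] at hσD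
          exact absurd hxσ (not_le.mpr hσD)
        have hcond : dist x₀ x ≤ δ_CZ * dist y x₀ := by
          rw [dist_comm y x₀]
          calc dist x₀ x ≤ σ := by rw [dist_comm]; exact hxσ
            _ = δ_CZ * (σ / δ_CZ) := by field_simp
            _ ≤ δ_CZ * dist x₀ y := by
                exact mul_le_mul_of_nonneg_left hD hδ0.le
        have hsm := hk' y x₀ x hyx₀ hxy hcond
        rw [dist_comm y x₀] at hsm
        have h1 : ‖k x y - k x₀ y‖ ≤ C_CZ * dist x₀ x ^ τ / dist x₀ y ^ (m + τ) := by
          rw [norm_sub_rev]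
          exact le_trans (le_add_of_nonneg_left (norm_nonneg _)) hsm
        have h2 : C_CZ * dist x₀ x ^ τ / dist x₀ y ^ (m + τ) ≤ B := by
          rw [hB, div_le_div_iff₀ (by positivity) (by positivity)]
          have : dist x₀ x ^ τ ≤ σ ^ τ :=
            Real.rpow_le_rpow dist_nonneg (by rw [dist_comm]; exact hxσ) hτ.le
          nlinarith [Real.rpow_pos_of_pos hDpos (m + τ), hCCZ,
            mul_le_mul_of_nonneg_left this hCCZ.le]
        calc ‖(k x y - k x₀ y) * φ x‖ = ‖k x y - k x₀ y‖ * ‖φ x‖ := norm_mul _ _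
          _ ≤ B * ‖φ x‖ := mul_le_mul_of_nonneg_right (h1.trans h2) (norm_nonneg _)
    have hkmeas : Measurable fun x => k x y :=
      hkm.comp measurable_prodMk_right
    have hgmeas : AEStronglyMeasurable (fun x => (k x y - k x₀ y) * φ x) μ :=
      ((hkmeas.sub measurable_const).aestronglyMeasurable).mul hφint.1
    have hg : Integrable (fun x => (k x y - k x₀ y) * φ x) μ :=
      Integrable.mono' (hφint.norm.const_mul B) hgmeas (Filter.Eventually.of_forall hbound)
    have hc : Integrable (fun x => k x₀ y * φ x) μ := hφint.const_mul _
    have hsplit : ∫ x, k x y * φ x ∂μ = ∫ x, (k x y - k x₀ y) * φ x ∂μ := by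
      calc ∫ x, k x y * φ x ∂μ
          = ∫ x, ((k x y - k x₀ y) * φ x + k x₀ y * φ x) ∂μ := by
            congr 1; funext x; ring
        _ = (∫ x, (k x y - k x₀ y) * φ x ∂μ) + ∫ x, k x₀ y * φ x ∂μ :=
            integral_add hg hc
        _ = ∫ x, (k x y - k x₀ y) * φ x ∂μ := by
            rw [integral_const_mul, hmean, mul_zero, add_zero]
    rw [hsplit]
    calc ‖∫ x, (k x y - k x₀ y) * φ x ∂μ‖
        ≤ ∫ x, ‖(k x y - k x₀ y) * φ x‖ ∂μ := norm_integral_le_integral_norm _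
      _ ≤ ∫ x, B * ‖φ x‖ ∂μ :=
          integral_mono hg.norm (hφint.norm.const_mul B) hbound
      _ = B * Φ := by rw [integral_const_mul]
  -- the chain is monotone
  have chain : ∀ i j : ℕ, i ≤ j → j ≤ N → R i ⊆ R j := by
    intro i j hij hjN
    induction j with
    | zero => exact Nat.le_zero.mp hij ▸ subset_rfl
    | succ n ih =>
      rcases Nat.lt_or_ge i (n + 1) with h | h
      · exact (ih (by omega) (by omega)).trans (hRchain n (by omega))
      · have : i = n + 1 := by omega
        exact this ▸ subset_rfl
  set t : ℕ → Set X := fun j => R j \ R (j - 1) with ht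
  have hTeq : R N \ R 0 = ⋃ j ∈ Finset.Icc 1 N, t j := by
    ext y
    constructor
    · rintro ⟨hyN, hy0⟩
      have hex : ∃ j, y ∈ R j := ⟨N, hyN⟩
      set j := Nat.find hex with hj
      have hjmem : y ∈ R j := Nat.find_spec hex
      have hjle : j ≤ N := Nat.find_le hyN
      have hj1 : 1 ≤ j := by
        rcases Nat.eq_zero_or_pos j with h | h
        · exact absurd (h ▸ hjmem) hy0
        · exact h
      have hjprev : y ∉ R (j - 1) := Nat.find_min hex (by omega)
      exact Set.mem_biUnion (Finset.mem_Icc.mpr ⟨hj1, hjle⟩) ⟨hjmem, hjprev⟩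
    · intro hy
      rcases Set.mem_iUnion₂.mp hy with ⟨j, hjI, hyj⟩
      rcases Finset.mem_Icc.mp hjI with ⟨hj1, hjN⟩
      exact ⟨chain j N hjN le_rfl hyj.1,
        fun h => hyj.2 (chain 0 (j - 1) (by omega) (by omega) h)⟩
  have htm : ∀ j, MeasurableSet (t j) := fun j => (hRm j).diff (hRm (j - 1))
  have hdisj : Set.Pairwise ↑(Finset.Icc 1 N) (Function.onFun Disjoint t) := by
    intro i hi j hj hij
    rcases Finset.mem_Icc.mp hi with ⟨hi1, hiN⟩
    rcases Finset.mem_Icc.mp hj with ⟨hj1, hjN⟩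
    have main : ∀ a b : ℕ, 1 ≤ a → b ≤ N → a < b → Disjoint (t a) (t b) := by
      intro a b _ hbN hab
      rw [Set.disjoint_left]
      intro z hza hzb
      exact hzb.2 (chain a (b - 1) (by omega) (by omega) hza.1)
    rcases lt_or_gt_of_ne hij with h | h
    · exact main i j hi1 hjN h
    · exact (main j i hj1 hiN h).symm
  set F : X → ℂ := fun y => ∫ x, k x y * φ x ∂μ with hF
  by_cases hint : IntegrableOn F (R N \ R 0) μ
  · -- per-annulus estimate
    have hterm : ∀ j ∈ Finset.Icc 1 N,
        ‖∫ y in t j, F y ∂μ‖ ≤ C_CZ * A * (σ / L₀) ^ (τ / 2) * Φ * r ^ j := by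
      intro j hjI
      rcases Finset.mem_Icc.mp hjI with ⟨hj1, hjN⟩
      set Lj : ℝ := L₀ / κ ^ j with hLj
      have hLjpos : 0 < Lj := by positivity
      have hDj : 0 < σ ^ α * Lj ^ (1 - α) := by positivity
      set M : ℝ := C_CZ * σ ^ τ / (σ ^ α * Lj ^ (1 - α)) ^ (m + τ) * Φ with hM
      have hM0 : 0 ≤ M := by positivity
      have hfin : μ (t j) < ⊤ :=
        lt_of_le_of_lt (le_trans (measure_mono Set.diff_subset) (hRμ j hj1 hjN))
          ENNReal.ofReal_lt_top
      have hboundt : ∀ y ∈ t j, ‖F y‖ ≤ M := by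
        intro y hyt
        have hy0 : y ∉ R 0 := fun h => hyt.2 (chain 0 (j - 1) (by omega) (by omega) h)
        have hdy : σ ^ α * Lj ^ (1 - α) ≤ dist x₀ y := hRdist j hj1 hjN y hyt
        calc ‖F y‖ ≤ C_CZ * σ ^ τ / dist x₀ y ^ (m + τ) * Φ := key y hy0
          _ ≤ M := by
              rw [hM]
              have hden : (0:ℝ) < (σ ^ α * Lj ^ (1 - α)) ^ (m + τ) :=
                Real.rpow_pos_of_pos hDj _
              have hden' : (σ ^ α * Lj ^ (1 - α)) ^ (m + τ) ≤ dist x₀ y ^ (m + τ) :=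
                Real.rpow_le_rpow hDj.le hdy hmτ.le
              have hnum : (0:ℝ) ≤ C_CZ * σ ^ τ := by positivity
              exact mul_le_mul_of_nonneg_right
                (div_le_div_of_nonneg_left hnum hden hden') hΦ0
      have hintt : IntegrableOn F (t j) μ := by
        apply hint.mono_set
        rw [hTeq]
        exact Set.subset_biUnion_of_mem hjI
      have step1 : ‖∫ y in t j, F y ∂μ‖ ≤ M * (μ (t j)).toReal :=
        norm_setIntegral_le_of_norm_le_const hfin hboundt
      have step2 : (μ (t j)).toReal ≤ A * Lj ^ m := by
        apply ENNReal.toReal_le_of_le_ofReal (by positivity)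
        exact le_trans (measure_mono Set.diff_subset) (hRμ j hj1 hjN)
      have step3 : M * (A * Lj ^ m) = C_CZ * A * (σ / L₀) ^ (τ / 2) * Φ * r ^ j := by
        have e1 : (σ ^ α * Lj ^ (1 - α)) ^ (m + τ)
            = σ ^ (τ / 2) * Lj ^ (m + τ / 2) := by
          rw [Real.mul_rpow (by positivity) (by positivity), ← Real.rpow_mul hσ.le,
            ← Real.rpow_mul hLjpos.le]
          have ea : α * (m + τ) = τ / 2 := by
            rw [hα]; field_simp
          have eb : (1 - α) * (m + τ) = m + τ / 2 := by
            rw [hα]; field_simp; ring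
          rw [ea, eb]
        have e2 : σ ^ τ = σ ^ (τ / 2) * σ ^ (τ / 2) := by
          rw [← Real.rpow_add hσ]; norm_num
        have e3 : Lj ^ (m + τ / 2) = Lj ^ m * Lj ^ (τ / 2) := Real.rpow_add hLjpos _ _
        have e4 : (σ / Lj) ^ (τ / 2) = (σ / L₀) ^ (τ / 2) * r ^ j := by
          have : σ / Lj = σ / L₀ * κ ^ j := by
            rw [hLj]; field_simp
          rw [this, Real.mul_rpow (by positivity) (by positivity), hr,
            ← Real.rpow_natCast κ j, ← Real.rpow_natCast (κ ^ (τ / 2) : ℝ) j,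
            ← Real.rpow_mul hκ0.le, ← Real.rpow_mul hκ0.le]
          ring_nf
        have e5 : (σ / Lj) ^ (τ / 2) = σ ^ (τ / 2) / Lj ^ (τ / 2) :=
          Real.div_rpow hσ.le hLjpos.le _
        have hσ2 : (0:ℝ) < σ ^ (τ / 2) := Real.rpow_pos_of_pos hσ _
        have hLm : (0:ℝ) < Lj ^ m := Real.rpow_pos_of_pos hLjpos _
        have hL2 : (0:ℝ) < Lj ^ (τ / 2) := Real.rpow_pos_of_pos hLjpos _
        have e6 : C_CZ * (σ ^ (τ / 2) * σ ^ (τ / 2)) /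
              (σ ^ (τ / 2) * (Lj ^ m * Lj ^ (τ / 2))) * Φ * (A * Lj ^ m)
            = C_CZ * A * Φ * (σ ^ (τ / 2) / Lj ^ (τ / 2)) := by
          field_simp
        rw [hM, e1, e2, e3, e6, ← e5, e4]
        ring
      calc ‖∫ y in t j, F y ∂μ‖ ≤ M * (μ (t j)).toReal := step1
        _ ≤ M * (A * Lj ^ m) := mul_le_mul_of_nonneg_left step2 hM0
        _ = C_CZ * A * (σ / L₀) ^ (τ / 2) * Φ * r ^ j := step3
    have hintt : ∀ j ∈ Finset.Icc 1 N, IntegrableOn F (t j) μ := by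
      intro j hjI
      apply hint.mono_set
      rw [hTeq]
      exact Set.subset_biUnion_of_mem hjI
    have hsum : ∑ j ∈ Finset.Icc 1 N, r ^ j ≤ (1 - r)⁻¹ := by
      calc ∑ j ∈ Finset.Icc 1 N, r ^ j
          ≤ ∑' j : ℕ, r ^ j :=
            Summable.sum_le_tsum _ (fun i _ => by positivity)
              (summable_geometric_of_lt_one hr0.le hr1)
        _ = (1 - r)⁻¹ := tsum_geometric_of_lt_one hr0.le hr1
    calc ‖∫ y in R N \ R 0, F y ∂μ‖
        = ‖∑ j ∈ Finset.Icc 1 N, ∫ y in t j, F y ∂μ‖ := by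
          rw [hTeq, integral_biUnion_finset _ (fun i _ => htm i) hdisj hintt]
      _ ≤ ∑ j ∈ Finset.Icc 1 N, ‖∫ y in t j, F y ∂μ‖ := norm_sum_le _ _
      _ ≤ ∑ j ∈ Finset.Icc 1 N, C_CZ * A * (σ / L₀) ^ (τ / 2) * Φ * r ^ j :=
          Finset.sum_le_sum hterm
      _ = C_CZ * A * (σ / L₀) ^ (τ / 2) * Φ * ∑ j ∈ Finset.Icc 1 N, r ^ j := by
          rw [Finset.mul_sum]
      _ ≤ C_CZ * A * (σ / L₀) ^ (τ / 2) * Φ * (1 - r)⁻¹ := by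
          apply mul_le_mul_of_nonneg_left hsum (by positivity)
      _ = C_CZ / (1 - r) * A * (σ / L₀) ^ (τ / 2) * Φ := by
          field_simp
  · rw [integral_undef hint]
    simp only [norm_zero]
    positivity
end
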